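/- arXiv:1510.04381 — 5 statements merged into one kernel-verified Lean document; each statement's English description precedes it below -/
import Mathlib

section
/- Let A_1 = K[a_1,…,a_n] and A_2 = K[b_1,…,b_m] be solvable polynomial algebras with admissible systems (𝔅_1, ≺_1) and (𝔅_2, ≺_2) respectively. Then A = A_1 ⊗_K A_2 is a solvable polynomial algebra with admissible system (𝔅, ≺), where 𝔅 = {a^α ⊗ b^β | a^α ∈ 𝔅_1, b^β ∈ 𝔅_2} and ≺ is defined by: a^α ⊗ b^β ≺ a^γ ⊗ b^η if and only if a^α ≺_1 a^γ, or a^α = a^γ and b^β ≺_2 b^η. -/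
noncomputable section

open scoped BigOperators

/-- A monomial ordering on the exponent monoid `ℕ^n`: a well-ordering, total and transitive,
admitting `0` (i.e. the monomial `1`) as least element and compatible with addition of
exponents (i.e. with multiplication of monomials from both sides). -/
structure MonOrder (n : ℕ) where
  lt : (Fin n → ℕ) → (Fin n → ℕ) → Prop
  wf : WellFounded lt
  lt_trans : ∀ {α β γ}, lt α β → lt β γ → lt α γ
  lt_total : ∀ α β, lt α β ∨ α = β ∨ lt β α
  zero_min : ∀ α : Fin n → ℕ, α ≠ 0 → lt 0 α
  add_right : ∀ {α β : Fin n → ℕ} (γ : Fin n → ℕ), lt α β → lt (α + γ) (β + γ)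

/-- The ordered monomial `a₁^{α 1} ⋯ a_n^{α n}` in the generators `a`. -/
def SolvMono {A : Type*} [Ring A] {n : ℕ} (a : Fin n → A) (α : Fin n → ℕ) : A :=
  ((List.finRange n).map fun i => a i ^ α i).prod

/-- A solvable polynomial algebra structure on a `K`-algebra `A` with generators
`gen 1, …, gen n`:  (S1) the ordered monomials in the generators form a PBW `K`-basis;
(S2) there is a monomial ordering `ord` such that
`a^α a^β = λ_{α,β} a^{α+β} + (terms ≺ a^{α+β})` with `λ_{α,β} ≠ 0`. -/
structure SolvAlg (K : Type*) [Field K] (A : Type*) [Ring A] [Algebra K A] (n : ℕ) where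
  gen : Fin n → A
  basis : Module.Basis (Fin n → ℕ) K A
  basis_eq : ∀ α, basis α = SolvMono gen α
  ord : MonOrder n
  s2_lc : ∀ α β, basis.repr (basis α * basis β) (α + β) ≠ 0
  s2_lower : ∀ α β δ, δ ∈ (basis.repr (basis α * basis β)).support → δ ≠ α + β →
    ord.lt δ (α + β)

namespace SolvAlg

variable {K : Type*} [Field K] {A : Type*} [Ring A] [Algebra K A] {n : ℕ}

/-- `α` is the exponent of the leading monomial of `f` (so in particular `f ≠ 0`). -/
def IsLM (S : SolvAlg K A n) (f : A) (α : Fin n → ℕ) : Prop :=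
  α ∈ (S.basis.repr f).support ∧
    ∀ β ∈ (S.basis.repr f).support, β ≠ α → S.ord.lt β α

/-- Left division of monomials: `a^α |_L a^β` iff `a^β = LM(a^γ a^α)` for some monomial `a^γ`. -/
def DvdL (S : SolvAlg K A n) (α β : Fin n → ℕ) : Prop :=
  ∃ γ, S.IsLM (S.basis γ * S.basis α) β

/-- `α ⪯ β` for the monomial ordering. -/
def LEord (S : SolvAlg K A n) (α β : Fin n → ℕ) : Prop :=
  α = β ∨ S.ord.lt α β

/-- `G` is a left Gröbner basis of the left ideal `N`. -/
def IsGBIdeal (S : SolvAlg K A n) (N : Ideal A) (G : Set A) : Prop :=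
  G ⊆ (N : Set A) ∧ (0 : A) ∉ G ∧
    ∀ f ∈ N, f ≠ 0 → ∃ g ∈ G, ∃ α β, S.IsLM g α ∧ S.IsLM f β ∧ S.DvdL α β

/-- The set of (exponents of) normal monomials mod `G`. -/
def NormalSet (S : SolvAlg K A n) (G : Set A) : Set (Fin n → ℕ) :=
  {γ | ∀ g ∈ G, ∀ α, S.IsLM g α → ¬ S.DvdL α γ}

/-- A minimal left Gröbner basis: no proper subset is again a left Gröbner basis. -/
def IsMinimalGBIdeal (S : SolvAlg K A n) (N : Ideal A) (G : Set A) : Prop :=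
  IsGBIdeal S N G ∧ ∀ G' : Set A, G' ⊂ G → ¬ IsGBIdeal S N G'

/-- A reduced left Gröbner basis: minimal, monic, and all tails normal mod `G`. -/
def IsReducedGBIdeal (S : SolvAlg K A n) (N : Ideal A) (G : Set A) : Prop :=
  IsMinimalGBIdeal S N G ∧
  (∀ g ∈ G, ∀ α, S.IsLM g α → S.basis.repr g α = 1) ∧
  (∀ g ∈ G, ∀ α, S.IsLM g α →
    g - S.basis α ∈ Submodule.span K ((fun γ => S.basis γ) '' NormalSet S G))

/-- The set of monomials `a^α e_i` occurring in an element `ξ` of the free module `A^s`. -/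
def MSupp (S : SolvAlg K A n) {s : ℕ} (ξ : Fin s → A) : Set ((Fin n → ℕ) × Fin s) :=
  {p | S.basis.repr (ξ p.2) p.1 ≠ 0}

/-- `p` is the leading monomial of `ξ` with respect to the (left monomial) ordering `r`
on the monomials of the free module `A^s`. -/
def IsLMMr (S : SolvAlg K A n) {s : ℕ}
    (r : ((Fin n → ℕ) × Fin s) → ((Fin n → ℕ) × Fin s) → Prop)
    (ξ : Fin s → A) (p : (Fin n → ℕ) × Fin s) : Prop :=
  p ∈ S.MSupp ξ ∧ ∀ q ∈ S.MSupp ξ, q ≠ p → r q p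

/-- Left division of module monomials:  `a^α e_i |_L a^β e_j` iff `i = j` and
`a^β e_i = LM(a^γ · a^α e_i)` for some `a^γ`. -/
def MDvdL (S : SolvAlg K A n) {s : ℕ} (p q : (Fin n → ℕ) × Fin s) : Prop :=
  p.2 = q.2 ∧ ∃ γ, S.IsLM (S.basis γ * S.basis p.1) q.1

/-- `G` is a left Gröbner basis of the set (submodule) `Nset` of the free module `A^s`,
with respect to the left monomial ordering `r`. -/
def IsGBrel (S : SolvAlg K A n) {s : ℕ}
    (r : ((Fin n → ℕ) × Fin s) → ((Fin n → ℕ) × Fin s) → Prop)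
    (Nset : Set (Fin s → A)) (G : Set (Fin s → A)) : Prop :=
  G ⊆ Nset ∧ (0 : Fin s → A) ∉ G ∧
    ∀ ξ ∈ Nset, ξ ≠ 0 → ∃ γ ∈ G, ∃ p q, S.IsLMMr r γ p ∧ S.IsLMMr r ξ q ∧ S.MDvdL p q

/-- The left S-polynomial `S_ℓ(ξ, ζ)` of `ξ, ζ` whose leading monomials are
`a^α e_i` and `a^β e_j` respectively. -/
def spolyData (S : SolvAlg K A n) {s : ℕ} (ξ ζ : Fin s → A)
    (α β : Fin n → ℕ) (i j : Fin s) : Fin s → A :=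
  if i = j then
    (S.basis.repr ((S.basis ((fun k => max (α k) (β k)) - α) • ξ) i)
        (fun k => max (α k) (β k)))⁻¹ •
      (S.basis ((fun k => max (α k) (β k)) - α) • ξ) -
    (S.basis.repr ((S.basis ((fun k => max (α k) (β k)) - β) • ζ) i)
        (fun k => max (α k) (β k)))⁻¹ •
      (S.basis ((fun k => max (α k) (β k)) - β) • ζ)
  else 0

end SolvAlg

/-- A left monomial ordering on the monomials `{a^α e_i}` of the free module `A^s`:
a total ordering compatible with the (left) multiplication by monomials of `A` and
restricting on each component to the monomial ordering of `A`. -/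
structure ModOrder {K : Type*} [Field K] {A : Type*} [Ring A] [Algebra K A] {n : ℕ}
    (S : SolvAlg K A n) (s : ℕ) where
  lt : ((Fin n → ℕ) × Fin s) → ((Fin n → ℕ) × Fin s) → Prop
  lt_irrefl : ∀ p, ¬ lt p p
  lt_trans : ∀ {p q r}, lt p q → lt q r → lt p r
  lt_total : ∀ p q, lt p q ∨ p = q ∨ lt q p
  compat : ∀ {α β : Fin n → ℕ} {i j : Fin s} (γ δ ε : Fin n → ℕ),
    lt (α, i) (β, j) → SolvAlg.IsLM S (S.basis γ * S.basis α) δ →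
    SolvAlg.IsLM S (S.basis γ * S.basis β) ε → lt (δ, i) (ε, j)
  base : ∀ (α β : Fin n → ℕ) (i : Fin s), S.ord.lt α β → lt (α, i) (β, i)

open scoped TensorProduct

namespace SolvTensorAux

open scoped TensorProduct

lemma finRange_add (n m : ℕ) : List.finRange (n+m) =
    ((List.finRange n).map (Fin.castAdd m)) ++ ((List.finRange m).map (Fin.natAdd n)) := by
  apply List.ext_getElem
  · simp
  · intro i h1 h2
    simp only [List.length_finRange] at h1
    rcases lt_or_ge i n with h | h
    · rw [List.getElem_append_left (by simpa), List.getElem_map]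
      apply Fin.ext
      simp [List.getElem_finRange]
    · rw [List.getElem_append_right (by simpa), List.getElem_map]
      apply Fin.ext
      simp [List.getElem_finRange, Fin.natAdd]
      omega

variable {K : Type*} [Field K] {A₁ : Type*} [Ring A₁] [Algebra K A₁]
  {A₂ : Type*} [Ring A₂] [Algebra K A₂] {n m : ℕ}

/-- Splitting an exponent vector of length `n+m` into its two parts. -/
def splitEquiv (n m : ℕ) : (Fin (n+m) → ℕ) ≃ (Fin n → ℕ) × (Fin m → ℕ) where
  toFun γ := (fun i => γ (Fin.castAdd m i), fun j => γ (Fin.natAdd n j))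
  invFun p := Fin.append p.1 p.2
  left_inv γ := by
    funext k
    refine Fin.addCases (fun i => ?_) (fun j => ?_) k
    · simp [Fin.append_left]
    · simp [Fin.append_right]
  right_inv p := by
    refine Prod.ext ?_ ?_ <;> funext i <;> simp [Fin.append_left, Fin.append_right]

lemma prod_map_tmul_one (l : List A₁) :
    (l.map fun x => x ⊗ₜ[K] (1 : A₂)).prod = l.prod ⊗ₜ[K] 1 := by
  induction l with
  | nil => simp [Algebra.TensorProduct.one_def]
  | cons a t ih => simp [ih, Algebra.TensorProduct.tmul_mul_tmul]

lemma prod_map_one_tmul (l : List A₂) :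
    (l.map fun x => (1 : A₁) ⊗ₜ[K] x).prod = (1 : A₁) ⊗ₜ[K] l.prod := by
  induction l with
  | nil => simp [Algebra.TensorProduct.one_def]
  | cons a t ih => simp [ih, Algebra.TensorProduct.tmul_mul_tmul]

lemma solvMono_tensor (a : Fin n → A₁) (b : Fin m → A₂) (γ : Fin (n+m) → ℕ) :
    SolvMono (fun k => Fin.addCases (fun i => a i ⊗ₜ[K] (1:A₂))
        (fun j => (1:A₁) ⊗ₜ[K] b j) k) γ =
      SolvMono a (fun i => γ (Fin.castAdd m i)) ⊗ₜ[K]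
        SolvMono b (fun j => γ (Fin.natAdd n j)) := by
  unfold SolvMono
  rw [finRange_add, List.map_append, List.prod_append, List.map_map, List.map_map]
  have e1 : ((fun k => (Fin.addCases (fun i => a i ⊗ₜ[K] (1:A₂))
      (fun j => (1:A₁) ⊗ₜ[K] b j) k) ^ γ k) ∘ Fin.castAdd m) =
      (fun x => x ⊗ₜ[K] (1 : A₂)) ∘ (fun i => a i ^ γ (Fin.castAdd m i)) := by
    funext i
    simp [Algebra.TensorProduct.tmul_pow]
  have e2 : ((fun k => (Fin.addCases (fun i => a i ⊗ₜ[K] (1:A₂))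
      (fun j => (1:A₁) ⊗ₜ[K] b j) k) ^ γ k) ∘ Fin.natAdd n) =
      (fun x => (1 : A₁) ⊗ₜ[K] x) ∘ (fun j => b j ^ γ (Fin.natAdd n j)) := by
    funext j
    simp [Algebra.TensorProduct.tmul_pow]
  rw [e1, e2, ← List.map_map, ← List.map_map, prod_map_tmul_one, prod_map_one_tmul,
    Algebra.TensorProduct.tmul_mul_tmul, one_mul, mul_one]

end SolvTensorAux

/-- Proposition 1.1.5: the tensor product `A₁ ⊗_K A₂` of two solvable polynomial algebras is
again a solvable polynomial algebra, with PBW basis `{a^α ⊗ b^β}` and with the monomial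
ordering given lexicographically from the two given ones. -/
theorem solvAlg_tensorProduct {K : Type*} [Field K]
    {A₁ : Type*} [Ring A₁] [Algebra K A₁] {A₂ : Type*} [Ring A₂] [Algebra K A₂]
    {n m : ℕ} (S₁ : SolvAlg K A₁ n) (S₂ : SolvAlg K A₂ m) :
    ∃ S : SolvAlg K (A₁ ⊗[K] A₂) (n + m),
      (∀ i : Fin n, S.gen (Fin.castAdd m i) = S₁.gen i ⊗ₜ[K] 1) ∧
      (∀ j : Fin m, S.gen (Fin.natAdd n j) = 1 ⊗ₜ[K] S₂.gen j) ∧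
      (∀ γ : Fin (n + m) → ℕ,
        S.basis γ =
          S₁.basis (fun i => γ (Fin.castAdd m i)) ⊗ₜ[K] S₂.basis (fun j => γ (Fin.natAdd n j))) ∧
      (∀ γ δ : Fin (n + m) → ℕ,
        S.ord.lt γ δ ↔
          S₁.ord.lt (fun i => γ (Fin.castAdd m i)) (fun i => δ (Fin.castAdd m i)) ∨
          ((fun i => γ (Fin.castAdd m i)) = (fun i => δ (Fin.castAdd m i)) ∧
            S₂.ord.lt (fun j => γ (Fin.natAdd n j)) (fun j => δ (Fin.natAdd n j))))     := by
  classical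
  set e := SolvTensorAux.splitEquiv n m with he
  have he1 : ∀ γ : Fin (n+m) → ℕ, (e γ).1 = fun i => γ (Fin.castAdd m i) := fun _ => rfl
  have he2 : ∀ γ : Fin (n+m) → ℕ, (e γ).2 = fun j => γ (Fin.natAdd n j) := fun _ => rfl
  have hadd : ∀ γ δ : Fin (n+m) → ℕ, e (γ + δ) = e γ + e δ := fun _ _ => rfl
  have hzero : e 0 = 0 := rfl
  -- the basis
  set B : Module.Basis (Fin (n+m) → ℕ) K (A₁ ⊗[K] A₂) :=
    (Module.Basis.tensorProduct S₁.basis S₂.basis).reindex e.symm with hB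
  have hBapp : ∀ γ, B γ = S₁.basis (e γ).1 ⊗ₜ[K] S₂.basis (e γ).2 := by
    intro γ
    rw [hB, Module.Basis.reindex_apply, Equiv.symm_symm, Module.Basis.tensorProduct_apply']
  have hBrepr : ∀ (x : A₁) (y : A₂) (γ : Fin (n+m) → ℕ),
      B.repr (x ⊗ₜ[K] y) γ = S₁.basis.repr x (e γ).1 * S₂.basis.repr y (e γ).2 := by
    intro x y γ
    rw [hB, Module.Basis.repr_reindex_apply, Equiv.symm_symm]
    rw [show e γ = ((e γ).1, (e γ).2) from rfl, Module.Basis.tensorProduct_repr_tmul_apply,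
      smul_eq_mul, mul_comm]
  have hmul : ∀ γ δ, B γ * B δ =
      (S₁.basis (e γ).1 * S₁.basis (e δ).1) ⊗ₜ[K] (S₂.basis (e γ).2 * S₂.basis (e δ).2) := by
    intro γ δ
    rw [hBapp, hBapp, Algebra.TensorProduct.tmul_mul_tmul]
  -- the order
  set lt : (Fin (n+m) → ℕ) → (Fin (n+m) → ℕ) → Prop :=
    fun γ δ => Prod.Lex S₁.ord.lt S₂.ord.lt (e γ) (e δ) with hlt
  have hlt_iff : ∀ γ δ, lt γ δ ↔
      S₁.ord.lt (e γ).1 (e δ).1 ∨ ((e γ).1 = (e δ).1 ∧ S₂.ord.lt (e γ).2 (e δ).2) := by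
    intro γ δ
    rw [hlt]
    exact Prod.lex_def
  refine ⟨{
    gen := fun k => Fin.addCases (fun i => S₁.gen i ⊗ₜ[K] (1:A₂))
      (fun j => (1:A₁) ⊗ₜ[K] S₂.gen j) k
    basis := B
    basis_eq := by
      intro γ
      rw [hBapp, S₁.basis_eq, S₂.basis_eq, SolvTensorAux.solvMono_tensor]
      rfl
    ord := {
      lt := lt
      wf := InvImage.wf e (WellFounded.prod_lex S₁.ord.wf S₂.ord.wf)
      lt_trans := by
        intro α β γ hab hbc
        rw [hlt_iff] at *
        rcases hab with h1 | ⟨h1, h1'⟩ <;> rcases hbc with h2 | ⟨h2, h2'⟩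
        · exact Or.inl (S₁.ord.lt_trans h1 h2)
        · exact Or.inl (h2 ▸ h1)
        · exact Or.inl (h1 ▸ h2)
        · exact Or.inr ⟨h1.trans h2, S₂.ord.lt_trans h1' h2'⟩
      lt_total := by
        intro α β
        rw [hlt_iff, hlt_iff]
        rcases S₁.ord.lt_total (e α).1 (e β).1 with h | h | h
        · exact Or.inl (Or.inl h)
        · rcases S₂.ord.lt_total (e α).2 (e β).2 with h' | h' | h'
          · exact Or.inl (Or.inr ⟨h, h'⟩)
          · exact Or.inr (Or.inl (e.injective (Prod.ext h h')))
          · exact Or.inr (Or.inr (Or.inr ⟨h.symm, h'⟩))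
        · exact Or.inr (Or.inr (Or.inl h))
      zero_min := by
        intro γ hγ
        rw [hlt_iff, hzero]
        by_cases h1 : (e γ).1 = 0
        · refine Or.inr ⟨h1.symm, S₂.ord.zero_min _ ?_⟩
          intro h2
          exact hγ (e.injective (by rw [hzero]; exact Prod.ext h1 h2))
        · exact Or.inl (S₁.ord.zero_min _ (Ne.symm (Ne.symm h1)))
      add_right := by
        intro α β γ h
        rw [hlt_iff] at h ⊢
        rw [hadd, hadd]
        rcases h with h | ⟨h, h'⟩
        · exact Or.inl (S₁.ord.add_right _ h)
        · exact Or.inr ⟨by rw [Prod.fst_add, Prod.fst_add, h], S₂.ord.add_right _ h'⟩ }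
    s2_lc := by
      intro γ δ
      rw [hmul, hBrepr, hadd]
      exact mul_ne_zero (S₁.s2_lc _ _) (S₂.s2_lc _ _)
    s2_lower := by
      intro γ δ ε hε hne
      rw [Finsupp.mem_support_iff, hmul, hBrepr] at hε
      have h1 : S₁.basis.repr (S₁.basis (e γ).1 * S₁.basis (e δ).1) (e ε).1 ≠ 0 :=
        fun h => hε (by rw [h, zero_mul])
      have h2 : S₂.basis.repr (S₂.basis (e γ).2 * S₂.basis (e δ).2) (e ε).2 ≠ 0 :=
        fun h => hε (by rw [h, mul_zero])
      show lt ε (γ + δ)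
      rw [hlt_iff, hadd]
      by_cases hfst : (e ε).1 = (e γ).1 + (e δ).1
      · refine Or.inr ⟨hfst, ?_⟩
        refine S₂.s2_lower _ _ _ (Finsupp.mem_support_iff.2 h2) ?_
        intro hsnd
        exact hne (e.injective (by rw [hadd]; exact Prod.ext hfst hsnd))
      · exact Or.inl (S₁.s2_lower _ _ _ (Finsupp.mem_support_iff.2 h1) hfst) },
    ?_, ?_, ?_, ?_⟩
  · intro i
    show Fin.addCases (fun i => S₁.gen i ⊗ₜ[K] (1:A₂))
      (fun j => (1:A₁) ⊗ₜ[K] S₂.gen j) (Fin.castAdd m i) = S₁.gen i ⊗ₜ[K] (1:A₂)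
    exact Fin.addCases_left i
  · intro j
    show Fin.addCases (fun i => S₁.gen i ⊗ₜ[K] (1:A₂))
      (fun j => (1:A₁) ⊗ₜ[K] S₂.gen j) (Fin.natAdd n j) = (1:A₁) ⊗ₜ[K] S₂.gen j
    exact Fin.addCases_right j
  · intro γ
    exact hBapp γ
  · intro γ δ
    exact hlt_iff γ δ
end
end

section
/- Let A be a solvable polynomial algebra with admissible system (𝔅, ≺), N a left ideal of A, and 𝒢 a left Gröbner basis of N. Set 𝒩(𝒢) = {a^α ∈ 𝔅 | LM(g) ∤_L a^α for all g ∈ 𝒢}. Then: (i) as K-vector spaces A = N ⊕ K-span 𝒩(𝒢); (ii) the cosets {a^α + N | a^α ∈ 𝒩(𝒢)} form a K-basis of A/N; and (iii) 𝒩(𝒢) is a finite set (equivalently dim_K A/N < ∞) if and only if for each i = 1,…,n there exists g ∈ 𝒢 with LM(g) = a_i^{m_i} for some m_i ∈ ℕ. -/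
noncomputable section

open scoped BigOperators

section AuxProof

namespace SolvAlg

variable {K : Type*} [Field K] {A : Type*} [Ring A] [Algebra K A] {n : ℕ}

theorem ord_irrefl (S : SolvAlg K A n) (α : Fin n → ℕ) : ¬ S.ord.lt α α :=
  fun h => S.ord.wf.asymmetric _ _ h h

theorem ord_exists_max (S : SolvAlg K A n) (s : Finset (Fin n → ℕ)) (hs : s.Nonempty) :
    ∃ α ∈ s, ∀ β ∈ s, β ≠ α → S.ord.lt β α := by
  classical
  induction s using Finset.induction with
  | empty => simp at hs
  | @insert a t ha ih =>
    rcases t.eq_empty_or_nonempty with rfl | ht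
    · exact ⟨a, by simp, by simp⟩
    · obtain ⟨m, hm, hmax⟩ := ih ht
      rcases S.ord.lt_total a m with h1 | h1 | h1
      · refine ⟨m, Finset.mem_insert_of_mem hm, ?_⟩
        intro β hβ hne
        rcases Finset.mem_insert.mp hβ with rfl | hβ
        · exact h1
        · exact hmax β hβ hne
      · subst h1; exact absurd hm ha
      · refine ⟨a, Finset.mem_insert_self a t, ?_⟩
        intro β hβ hne
        rcases Finset.mem_insert.mp hβ with rfl | hβ
        · exact absurd rfl hne
        · by_cases hbm : β = m
          · subst hbm; exact h1
          · exact S.ord.lt_trans (hmax β hβ hbm) h1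

theorem exists_isLM (S : SolvAlg K A n) {f : A} (hf : f ≠ 0) : ∃ α, S.IsLM f α := by
  have h : (S.basis.repr f).support.Nonempty := by
    rw [Finsupp.support_nonempty_iff]
    simpa using hf
  obtain ⟨α, hα, hmax⟩ := S.ord_exists_max _ h
  exact ⟨α, hα, hmax⟩

theorem IsLM.unique {S : SolvAlg K A n} {f : A} {α β : Fin n → ℕ}
    (h1 : S.IsLM f α) (h2 : S.IsLM f β) : α = β := by
  by_contra hne
  exact S.ord.wf.asymmetric _ _ (h1.2 β h2.1 (Ne.symm hne)) (h2.2 α h1.1 hne)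

theorem isLM_basis (S : SolvAlg K A n) (α : Fin n → ℕ) : S.IsLM (S.basis α) α := by
  constructor
  · simp [Module.Basis.repr_self]
  · intro β hβ hne
    simp [Module.Basis.repr_self, Finsupp.support_single_ne_zero] at hβ
    exact absurd hβ hne

theorem repr_basis_mul (S : SolvAlg K A n) (γ : Fin n → ℕ) (f : A) (ε : Fin n → ℕ) :
    S.basis.repr (S.basis γ * f) ε =
      (S.basis.repr f).sum (fun β c => c * S.basis.repr (S.basis γ * S.basis β) ε) := by
  conv_lhs => rw [← S.basis.linearCombination_repr f]
  rw [Finsupp.linearCombination_apply, Finsupp.mul_sum, map_finsuppSum, Finsupp.sum_apply]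
  refine Finsupp.sum_congr ?_
  intro β _
  rw [mul_smul_comm, map_smul, Finsupp.smul_apply, smul_eq_mul]

theorem isLM_basis_mul {S : SolvAlg K A n} {f : A} {δ : Fin n → ℕ} (hf : S.IsLM f δ)
    (γ : Fin n → ℕ) : S.IsLM (S.basis γ * f) (γ + δ) := by
  classical
  obtain ⟨hδ, hmax⟩ := hf
  have hlt : ∀ β ∈ (S.basis.repr f).support, β ≠ δ → S.ord.lt (γ + β) (γ + δ) := by
    intro β hβ hne
    have := S.ord.add_right γ (hmax β hβ hne)
    simpa [add_comm] using this
  have hsupε : ∀ β, ∀ ε ∈ (S.basis.repr (S.basis γ * S.basis β)).support,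
      ε = γ + β ∨ S.ord.lt ε (γ + β) := by
    intro β ε hε
    by_cases h : ε = γ + β
    · exact Or.inl h
    · exact Or.inr (S.s2_lower γ β ε hε h)
  constructor
  · rw [Finsupp.mem_support_iff, S.repr_basis_mul, Finsupp.sum]
    rw [Finset.sum_eq_single δ]
    · exact mul_ne_zero (Finsupp.mem_support_iff.mp hδ) (S.s2_lc γ δ)
    · intro β hβ hne
      have hnotmem : (γ + δ) ∉ (S.basis.repr (S.basis γ * S.basis β)).support := by
        intro hmem
        rcases hsupε β _ hmem with heq | hltm
        · exact S.ord_irrefl _ (heq ▸ hlt β hβ hne)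
        · exact S.ord_irrefl _ (S.ord.lt_trans hltm (hlt β hβ hne))
      rw [Finsupp.notMem_support_iff.mp hnotmem, mul_zero]
    · intro h; exact absurd hδ h
  · intro ε hε hne
    rw [Finsupp.mem_support_iff, S.repr_basis_mul, Finsupp.sum] at hε
    obtain ⟨β, hβ, hterm⟩ := Finset.exists_ne_zero_of_sum_ne_zero hε
    have hε2 : ε ∈ (S.basis.repr (S.basis γ * S.basis β)).support := by
      rw [Finsupp.mem_support_iff]
      exact fun h => hterm (by rw [h, mul_zero])
    by_cases hbd : β = δ
    · subst hbd
      rcases hsupε β _ hε2 with heq | hltm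
      · exact absurd heq hne
      · exact hltm
    · have h1 : S.ord.lt (γ + β) (γ + δ) := hlt β hβ hbd
      rcases hsupε β _ hε2 with heq | hltm
      · exact heq ▸ h1
      · exact S.ord.lt_trans hltm h1

theorem dvdL_iff {S : SolvAlg K A n} {α β : Fin n → ℕ} :
    S.DvdL α β ↔ ∃ γ, β = γ + α := by
  constructor
  · rintro ⟨γ, hγ⟩
    exact ⟨γ, hγ.unique (isLM_basis_mul (S.isLM_basis α) γ)⟩
  · rintro ⟨γ, rfl⟩
    exact ⟨γ, isLM_basis_mul (S.isLM_basis α) γ⟩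

theorem mem_span_iff_support (S : SolvAlg K A n) (s : Set (Fin n → ℕ)) (f : A) :
    f ∈ Submodule.span K ((fun γ => S.basis γ) '' s) ↔
      ↑(S.basis.repr f).support ⊆ s := by
  classical
  constructor
  · intro h
    induction h using Submodule.span_induction with
    | mem x hx =>
      obtain ⟨γ, hγ, rfl⟩ := hx
      intro β hβ
      simp only [Module.Basis.repr_self, Finset.mem_coe,
        Finsupp.support_single_ne_zero _ (one_ne_zero (α := K)),
        Finset.mem_singleton] at hβ
      exact hβ ▸ hγ
    | zero => simp
    | add x y _ _ ihx ihy =>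
      refine subset_trans ?_ (Set.union_subset ihx ihy)
      rw [map_add]
      exact_mod_cast Finsupp.support_add
    | smul c x _ ih =>
      intro β hβ
      apply ih
      simp only [Finset.mem_coe, Finsupp.mem_support_iff, map_smul,
        Finsupp.smul_apply] at hβ ⊢
      intro h0
      exact hβ (by rw [h0, smul_zero])
  · intro h
    rw [← S.basis.linearCombination_repr f, Finsupp.linearCombination_apply, Finsupp.sum]
    exact Submodule.sum_mem _ fun γ hγ =>
      Submodule.smul_mem _ _ (Submodule.subset_span ⟨γ, h hγ, rfl⟩)

end SolvAlg

end AuxProof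

/-- Proposition 1.2.7 (iv), (v), (vi): basic facts determined by a left Gröbner basis `𝒢`
of a left ideal `N`: (i) `A = N ⊕ K`-span `𝒩(𝒢)` as `K`-vector spaces; (ii) the cosets of
the normal monomials form a `K`-basis of `A/N`; (iii) `𝒩(𝒢)` is finite (equivalently
`dim_K A/N < ∞`) iff for every `i` some `g ∈ 𝒢` has `LM g = a_i^{m_i}`. -/
theorem solvAlg_GB_decomposition {K : Type*} [Field K] {A : Type*} [Ring A] [Algebra K A]
    {n : ℕ} (S : SolvAlg K A n) (N : Ideal A) (G : Set A)
    (hGB : SolvAlg.IsGBIdeal S N G) :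
    (Submodule.restrictScalars K N ⊔
        Submodule.span K ((fun γ => S.basis γ) '' SolvAlg.NormalSet S G) = ⊤ ∧
      Submodule.restrictScalars K N ⊓
        Submodule.span K ((fun γ => S.basis γ) '' SolvAlg.NormalSet S G) = ⊥) ∧
    (LinearIndependent K (fun γ : SolvAlg.NormalSet S G =>
        (Submodule.Quotient.mk (S.basis (γ : Fin n → ℕ)) : A ⧸ N)) ∧
      Submodule.span K (Set.range (fun γ : SolvAlg.NormalSet S G =>
        (Submodule.Quotient.mk (S.basis (γ : Fin n → ℕ)) : A ⧸ N))) = ⊤) ∧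
    ((SolvAlg.NormalSet S G).Finite ↔
      ∀ i : Fin n, ∃ g ∈ G, ∃ m : ℕ, S.IsLM g (Pi.single i m)) ∧
    ((SolvAlg.NormalSet S G).Finite ↔ FiniteDimensional K (A ⧸ N)) := by
  classical
  obtain ⟨hGN, hG0, hGdvd⟩ := hGB
  set V := Submodule.span K ((fun γ => S.basis γ) '' SolvAlg.NormalSet S G) with hVdef
  -- Part (i): sup = ⊤
  have hsup : Submodule.restrictScalars K N ⊔ V = ⊤ := by
    rw [eq_top_iff]
    rintro f -
    by_cases hf : f = 0
    · exact hf ▸ Submodule.zero_mem _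
    obtain ⟨αf, hαf⟩ := S.exists_isLM hf
    have H : ∀ α : Fin n → ℕ, ∀ f : A, (∀ β ∈ (S.basis.repr f).support, S.LEord β α) →
        f ∈ Submodule.restrictScalars K N ⊔ V := by
      intro α
      refine S.ord.wf.induction (C := fun α => ∀ f : A,
        (∀ β ∈ (S.basis.repr f).support, S.LEord β α) →
          f ∈ Submodule.restrictScalars K N ⊔ V) α ?_
      clear hf hαf αf f α
      intro α IH f hsupp
      by_cases hf0 : f = 0
      · exact hf0 ▸ Submodule.zero_mem _
      obtain ⟨α₀, hα₀⟩ := S.exists_isLM hf0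
      have hle : S.LEord α₀ α := hsupp α₀ hα₀.1
      have step : ∀ f' : A, (∀ β ∈ (S.basis.repr f').support, S.ord.lt β α₀) →
          f' ∈ Submodule.restrictScalars K N ⊔ V := by
        intro f' hsup'
        by_cases h0 : f' = 0
        · exact h0 ▸ Submodule.zero_mem _
        obtain ⟨α₁, hα₁⟩ := S.exists_isLM h0
        have h1 : S.ord.lt α₁ α₀ := hsup' α₁ hα₁.1
        have h2 : S.ord.lt α₁ α := by
          rcases hle with rfl | hlt
          · exact h1
          · exact S.ord.lt_trans h1 hlt
        refine IH α₁ h2 f' fun β hβ => ?_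
        by_cases hbe : β = α₁
        · exact Or.inl hbe
        · exact Or.inr (hα₁.2 β hβ hbe)
      by_cases hnorm : α₀ ∈ SolvAlg.NormalSet S G
      · have hb : S.basis.repr f α₀ • S.basis α₀ ∈ V :=
          Submodule.smul_mem _ _ (Submodule.subset_span ⟨α₀, hnorm, rfl⟩)
        have hf' : f - S.basis.repr f α₀ • S.basis α₀ ∈
            Submodule.restrictScalars K N ⊔ V := by
          refine step _ fun β hβ => ?_
          rw [Finsupp.mem_support_iff, map_sub, map_smul, Finsupp.sub_apply,
            Finsupp.smul_apply, Module.Basis.repr_self, smul_eq_mul] at hβ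
          by_cases hbe : β = α₀
          · subst hbe
            simp at hβ
          · refine hα₀.2 β ?_ hbe
            rw [Finsupp.mem_support_iff]
            intro h0
            exact hβ (by rw [h0, Finsupp.single_eq_of_ne hbe, mul_zero, sub_zero])
        have := Submodule.add_mem _ hf' (Submodule.mem_sup_right hb)
        simpa using this
      · simp only [SolvAlg.NormalSet, Set.mem_setOf_eq] at hnorm
        push_neg at hnorm
        obtain ⟨g, hg, δ, hLMg, hdvd⟩ := hnorm
        obtain ⟨γ, hγ⟩ := hdvd
        have hα₀eq : α₀ = γ + δ :=
          SolvAlg.IsLM.unique hγ (SolvAlg.isLM_basis_mul (S.isLM_basis δ) γ)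
        have hLMh : S.IsLM (S.basis γ * g) α₀ := by
          rw [hα₀eq]
          exact SolvAlg.isLM_basis_mul hLMg γ
        have hhN : S.basis γ * g ∈ N := N.mul_mem_left _ (hGN hg)
        have hdne : S.basis.repr (S.basis γ * g) α₀ ≠ 0 := Finsupp.mem_support_iff.mp hLMh.1
        set q := S.basis.repr f α₀ * (S.basis.repr (S.basis γ * g) α₀)⁻¹ with hq
        have hf' : f - q • (S.basis γ * g) ∈ Submodule.restrictScalars K N ⊔ V := by
          refine step _ fun β hβ => ?_
          rw [Finsupp.mem_support_iff, map_sub, map_smul, Finsupp.sub_apply,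
            Finsupp.smul_apply, smul_eq_mul] at hβ
          by_cases hbe : β = α₀
          · subst hbe
            exact absurd (by rw [hq]; field_simp; simp) hβ
          · by_cases hfβ : β ∈ (S.basis.repr f).support
            · exact hα₀.2 β hfβ hbe
            · refine hLMh.2 β ?_ hbe
              rw [Finsupp.mem_support_iff]
              intro h0
              exact hβ (by rw [Finsupp.notMem_support_iff.mp hfβ, h0, mul_zero, sub_zero])
        have hqh : q • (S.basis γ * g) ∈ Submodule.restrictScalars K N :=
          Submodule.smul_mem _ q hhN
        have := Submodule.add_mem _ hf' (Submodule.mem_sup_left hqh)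
        simpa using this
    refine H αf f fun β hβ => ?_
    by_cases hbe : β = αf
    · exact Or.inl hbe
    · exact Or.inr (hαf.2 β hβ hbe)
  -- Part (i): inf = ⊥
  have hinf : Submodule.restrictScalars K N ⊓ V = ⊥ := by
    rw [eq_bot_iff]
    rintro f ⟨hfN, hfV⟩
    rw [Submodule.mem_bot]
    by_contra hf0
    obtain ⟨g, hg, αg, β, hLMg, hLMf, hdvd⟩ := hGdvd f hfN hf0
    have hβ : β ∈ SolvAlg.NormalSet S G :=
      (S.mem_span_iff_support _ f).mp hfV hLMf.1
    exact hβ g hg αg hLMg hdvd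
  -- The quotient map as a K-linear map
  let φ : A →ₗ[K] (A ⧸ N) :=
    { toFun := fun x => Submodule.Quotient.mk x
      map_add' := fun x y => by
        change Submodule.Quotient.mk (x + y)
          = Submodule.Quotient.mk x + Submodule.Quotient.mk y
        rw [Submodule.Quotient.mk_add]
      map_smul' := fun c x => by
        change Submodule.Quotient.mk (c • x) = c • Submodule.Quotient.mk x
        rw [Submodule.Quotient.mk_smul] }
  have hkerφ : LinearMap.ker φ = Submodule.restrictScalars K N := by
    ext x
    simp only [LinearMap.mem_ker, Submodule.restrictScalars_mem, φ, LinearMap.coe_mk,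
      AddHom.coe_mk, Submodule.Quotient.mk_eq_zero]
  -- Part (ii): linear independence
  have hli : LinearIndependent K (fun γ : SolvAlg.NormalSet S G =>
      (Submodule.Quotient.mk (S.basis (γ : Fin n → ℕ)) : A ⧸ N)) := by
    have h1 : LinearIndependent K fun γ : SolvAlg.NormalSet S G => S.basis ↑γ :=
      S.basis.linearIndependent.comp _ Subtype.val_injective
    have hrange : Set.range (fun γ : SolvAlg.NormalSet S G => S.basis ↑γ)
        = (fun γ => S.basis γ) '' SolvAlg.NormalSet S G := (Set.image_eq_range _ _).symm
    have hdisj : Disjoint (Submodule.span K (Set.range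
        (fun γ : SolvAlg.NormalSet S G => S.basis ↑γ))) (LinearMap.ker φ) := by
      rw [hrange, hkerφ]
      exact disjoint_iff.mpr (by rw [inf_comm]; exact hinf)
    exact h1.map hdisj
  -- Part (ii): spanning
  have hspan : Submodule.span K (Set.range (fun γ : SolvAlg.NormalSet S G =>
      (Submodule.Quotient.mk (S.basis (γ : Fin n → ℕ)) : A ⧸ N))) = ⊤ := by
    have hr : (Set.range (fun γ : SolvAlg.NormalSet S G =>
        (Submodule.Quotient.mk (S.basis (γ : Fin n → ℕ)) : A ⧸ N)))
        = φ '' ((fun γ => S.basis γ) '' SolvAlg.NormalSet S G) := by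
      rw [Set.image_image]
      exact (Set.image_eq_range (fun γ => φ (S.basis γ)) (SolvAlg.NormalSet S G)).symm
    rw [hr, ← Submodule.map_span]
    have h1 : Submodule.map φ (Submodule.restrictScalars K N ⊔ V) = ⊤ := by
      rw [hsup, Submodule.map_top, LinearMap.range_eq_top]
      exact Submodule.Quotient.mk_surjective N
    rw [Submodule.map_sup] at h1
    have h0 : Submodule.map φ (Submodule.restrictScalars K N) = ⊥ := by
      rw [eq_bot_iff]
      rintro x ⟨y, hy, rfl⟩
      rw [Submodule.mem_bot]
      have : y ∈ LinearMap.ker φ := by rw [hkerφ]; exact hy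
      exact this
    rw [h0, bot_sup_eq] at h1
    exact h1
  -- Part (iii)
  have hiff1 : (SolvAlg.NormalSet S G).Finite ↔
      ∀ i : Fin n, ∃ g ∈ G, ∃ m : ℕ, S.IsLM g (Pi.single i m) := by
    constructor
    · intro hfin i
      have hinj : Function.Injective fun m : ℕ => (Pi.single i m : Fin n → ℕ) := by
        intro a b hab
        have := congrFun hab i
        simpa using this
      have hnot : ¬ ∀ m : ℕ, (Pi.single i m : Fin n → ℕ) ∈ SolvAlg.NormalSet S G := by
        intro hall
        exact (Set.infinite_of_injective_forall_mem hinj hall) hfin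
      push_neg at hnot
      obtain ⟨m, hm⟩ := hnot
      simp only [SolvAlg.NormalSet, Set.mem_setOf_eq] at hm
      push_neg at hm
      obtain ⟨g, hg, δ, hLM, hdvd⟩ := hm
      obtain ⟨γ, hγeq⟩ := SolvAlg.dvdL_iff.mp hdvd
      refine ⟨g, hg, δ i, ?_⟩
      have hδ : δ = Pi.single i (δ i) := by
        funext j
        by_cases hj : j = i
        · subst hj; simp
        · have hz := congrFun hγeq j
          simp only [Pi.single_eq_of_ne hj, Pi.add_apply] at hz
          simp [Pi.single_eq_of_ne hj, (Nat.add_eq_zero.mp hz.symm).2]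
      exact hδ ▸ hLM
    · intro hI
      choose g hgG m hgLM using hI
      have hsub : SolvAlg.NormalSet S G ⊆ Set.pi Set.univ (fun i => Set.Iio (m i)) := by
        intro γ hγ i _
        simp only [Set.mem_Iio]
        by_contra hge
        push_neg at hge
        have hdvd : S.DvdL (Pi.single i (m i)) γ := by
          rw [SolvAlg.dvdL_iff]
          refine ⟨γ - Pi.single i (m i), ?_⟩
          funext j
          by_cases hj : j = i
          · subst hj
            simp only [Pi.add_apply, Pi.sub_apply, Pi.single_eq_same]
            omega
          · simp [Pi.single_eq_of_ne hj]
        exact hγ (g i) (hgG i) _ (hgLM i) hdvd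
      exact (Set.Finite.pi fun i => Set.finite_Iio (m i)).subset hsub
  -- Part (iv)
  have hiff2 : (SolvAlg.NormalSet S G).Finite ↔ FiniteDimensional K (A ⧸ N) := by
    constructor
    · intro hfin
      have : Finite ↥(SolvAlg.NormalSet S G) := hfin.to_subtype
      exact ⟨Submodule.fg_def.mpr ⟨_, Set.finite_range _, hspan⟩⟩
    · intro hFD
      have : IsNoetherian K (A ⧸ N) := IsNoetherian.iff_fg.mpr hFD
      have hfin : Finite ↥(SolvAlg.NormalSet S G) := hli.finite_of_isNoetherian
      exact Set.finite_coe_iff.mp hfin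
  exact ⟨⟨hsup, hinf⟩, ⟨hli, hspan⟩, hiff1, hiff2⟩
end
end

section
/- Every solvable polynomial algebra A = K[a_1,…,a_n] is left Noetherian and right Noetherian. -/
noncomputable section

open scoped BigOperators

namespace SolvAlgProof

open MulOpposite

variable {n : ℕ}

theorem exists_max (o : MonOrder n) (s : Finset (Fin n → ℕ)) (hs : s.Nonempty) :
    ∃ m ∈ s, ∀ b ∈ s, b ≠ m → o.lt b m := by
  classical
  induction s using Finset.induction_on with
  | empty => exact absurd hs (by simp)
  | @insert a s ha ih =>
    rcases s.eq_empty_or_nonempty with rfl | hs'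
    · exact ⟨a, by simp, by simp⟩
    · obtain ⟨m, hm, hmax⟩ := ih hs'
      rcases o.lt_total a m with h | h | h
      · refine ⟨m, Finset.mem_insert_of_mem hm, ?_⟩
        intro b hb hbm
        rcases Finset.mem_insert.1 hb with rfl | hb
        · exact h
        · exact hmax b hb hbm
      · subst h
        refine ⟨a, Finset.mem_insert_self a s, ?_⟩
        intro b hb hba
        rcases Finset.mem_insert.1 hb with rfl | hb
        · exact absurd rfl hba
        · exact hmax b hb hba
      · refine ⟨a, Finset.mem_insert_self a s, ?_⟩
        intro b hb hba
        rcases Finset.mem_insert.1 hb with rfl | hb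
        · exact absurd rfl hba
        · rcases eq_or_ne b m with rfl | hbm
          · exact h
          · exact o.lt_trans (hmax b hb hbm) h

theorem mon_irrefl (o : MonOrder n) (α : Fin n → ℕ) : ¬ o.lt α α :=
  (o.wf.isIrrefl).irrefl α

theorem lt_add_left (o : MonOrder n) {α β : Fin n → ℕ} (γ : Fin n → ℕ) (h : o.lt α β) :
    o.lt (γ + α) (γ + β) := by
  have := o.add_right γ h
  rwa [add_comm α γ, add_comm β γ] at this

/-- From a PWO set extract a finite dominating-from-below subset. -/
theorem exists_dominating {α : Type*} [Preorder α] {E : Set α} (h : E.IsPWO) :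
    ∃ F : Finset α, (F : Set α) ⊆ E ∧ ∀ e ∈ E, ∃ f ∈ F, f ≤ e := by
  classical
  by_contra Hc
  push_neg at Hc
  obtain ⟨e0, he0, -⟩ := Hc ∅ (by simp)
  haveI : Inhabited α := ⟨e0⟩
  set pick : Finset α → α := fun F => if hF : (F : Set α) ⊆ E then (Hc F hF).choose else default
    with hpick
  have pick_mem : ∀ F : Finset α, (F : Set α) ⊆ E → pick F ∈ E := by
    intro F hF; simp only [hpick, dif_pos hF]; exact (Hc F hF).choose_spec.1
  have pick_not : ∀ F : Finset α, (F : Set α) ⊆ E → ∀ f ∈ F, ¬ f ≤ pick F := by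
    intro F hF; simp only [hpick, dif_pos hF]; exact (Hc F hF).choose_spec.2
  let Fs : ℕ → Finset α := fun k => Nat.rec (motive := fun _ => Finset α) ∅ (fun _ F => insert (pick F) F) k
  have hFsub : ∀ k, (Fs k : Set α) ⊆ E := by
    intro k
    induction k with
    | zero => simp [Fs]
    | succ k ih =>
      intro x hx
      rcases Finset.mem_insert.1 hx with rfl | hx
      · exact pick_mem _ ih
      · exact ih hx
  let g : ℕ → α := fun k => pick (Fs k)
  have hgmem : ∀ k, g k ∈ Fs (k + 1) := fun k => Finset.mem_insert_self _ _
  have hmono : ∀ i j, i ≤ j → Fs i ⊆ Fs j := by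
    intro i j hij
    induction hij with
    | refl => exact subset_rfl
    | step _ ih => exact fun x hx => Finset.mem_insert_of_mem (ih hx)
  have hgE : ∀ k, g k ∈ E := fun k => pick_mem (Fs k) (hFsub k)
  obtain ⟨i, j, hij, hle⟩ := h.exists_lt hgE
  exact pick_not (Fs j) (hFsub j) (g i) (hmono (i + 1) j hij (hgmem i)) hle

variable {K : Type*} [Field K] {A : Type*} [Ring A] [Algebra K A]

theorem exists_isLM (S : SolvAlg K A n) {f : A} (hf : f ≠ 0) : ∃ α, S.IsLM f α := by
  have hne : (S.basis.repr f).support.Nonempty :=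
    Finsupp.support_nonempty_iff.2 fun h => hf ((LinearEquiv.map_eq_zero_iff S.basis.repr).1 h)
  obtain ⟨m, hm, hmax⟩ := exists_max S.ord _ hne
  exact ⟨m, hm, hmax⟩

theorem isLM_unique (S : SolvAlg K A n) {f : A} {α β : Fin n → ℕ}
    (hα : S.IsLM f α) (hβ : S.IsLM f β) : α = β := by
  by_contra hne
  have h1 : S.ord.lt β α := hα.2 β hβ.1 (Ne.symm hne)
  have h2 : S.ord.lt α β := hβ.2 α hα.1 hne
  exact mon_irrefl S.ord α (S.ord.lt_trans h2 h1)

/-- Key lemma: leading exponent of `basis γ * f` is `γ + LM f`. -/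
theorem isLM_basis_mul (S : SolvAlg K A n) (γ : Fin n → ℕ) {f : A} {α : Fin n → ℕ}
    (hα : S.IsLM f α) : S.IsLM (S.basis γ * f) (γ + α) := by
  classical
  set c := S.basis.repr f with hc
  have hf_eq : f = ∑ β ∈ c.support, c β • S.basis β := by
    conv_lhs => rw [← S.basis.linearCombination_repr f]
    rw [Finsupp.linearCombination_apply, Finsupp.sum]
  have hmul : S.basis γ * f = ∑ β ∈ c.support, c β • (S.basis γ * S.basis β) := by
    rw [hf_eq, Finset.mul_sum]
    exact Finset.sum_congr rfl fun β _ => (mul_smul_comm _ _ _)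
  have hrepr : ∀ δ, S.basis.repr (S.basis γ * f) δ
      = ∑ β ∈ c.support, c β * S.basis.repr (S.basis γ * S.basis β) δ := by
    intro δ
    rw [hmul, map_sum, Finsupp.finset_sum_apply]
    exact Finset.sum_congr rfl fun β _ => by rw [map_smul, Finsupp.smul_apply, smul_eq_mul]
  -- terms with β ≠ α contribute 0 at γ + α
  have hbound : ∀ β δ, S.basis.repr (S.basis γ * S.basis β) δ ≠ 0 →
      δ = γ + β ∨ S.ord.lt δ (γ + β) := by
    intro β δ hδ
    rcases eq_or_ne δ (γ + β) with h | h
    · exact Or.inl h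
    · exact Or.inr (S.s2_lower γ β δ (Finsupp.mem_support_iff.2 hδ) h)
  have hzero : ∀ β ∈ c.support, β ≠ α →
      S.basis.repr (S.basis γ * S.basis β) (γ + α) = 0 := by
    intro β hβ hβα
    by_contra hne
    have hltβ : S.ord.lt β α := hα.2 β hβ hβα
    have h1 : S.ord.lt (γ + β) (γ + α) := lt_add_left S.ord γ hltβ
    rcases hbound β (γ + α) hne with h | h
    · exact mon_irrefl S.ord _ (h ▸ h1)
    · exact mon_irrefl S.ord _ (S.ord.lt_trans h h1)
  have hlead : S.basis.repr (S.basis γ * f) (γ + α)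
      = c α * S.basis.repr (S.basis γ * S.basis α) (γ + α) := by
    rw [hrepr]
    rw [Finset.sum_eq_single α]
    · intro β hβ hβα
      rw [hzero β hβ hβα, mul_zero]
    · intro hαs
      rw [Finsupp.notMem_support_iff.1 hαs, zero_mul]
  have hlead_ne : S.basis.repr (S.basis γ * f) (γ + α) ≠ 0 := by
    rw [hlead]
    exact mul_ne_zero (Finsupp.mem_support_iff.1 hα.1) (S.s2_lc γ α)
  refine ⟨Finsupp.mem_support_iff.2 hlead_ne, ?_⟩
  intro δ hδ hδne
  rw [Finsupp.mem_support_iff, hrepr] at hδ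
  obtain ⟨β, hβ, hβne⟩ : ∃ β ∈ c.support, c β * S.basis.repr (S.basis γ * S.basis β) δ ≠ 0 := by
    by_contra hc'
    push_neg at hc'
    exact hδ (Finset.sum_eq_zero hc')
  have hδb : S.basis.repr (S.basis γ * S.basis β) δ ≠ 0 := fun h => hβne (by rw [h, mul_zero])
  have hβα : β = α ∨ S.ord.lt β α := by
    rcases eq_or_ne β α with h | h
    · exact Or.inl h
    · exact Or.inr (hα.2 β hβ h)
  have hle : δ = γ + β ∨ S.ord.lt δ (γ + β) := hbound β δ hδb
  rcases hβα with rfl | hβα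
  · rcases hle with rfl | h
    · exact absurd rfl hδne
    · exact h
  · have h2 : S.ord.lt (γ + β) (γ + α) := lt_add_left S.ord γ hβα
    rcases hle with rfl | h
    · exact h2
    · exact S.ord.lt_trans h h2


theorem submodule_fg (S : SolvAlg K A n) (N : Submodule A A) : N.FG := by
  classical
  set E : Set (Fin n → ℕ) := {α | ∃ f, f ∈ N ∧ f ≠ 0 ∧ S.IsLM f α} with hE
  obtain ⟨F, hFE, hdom⟩ := exists_dominating (Set.isPWO_of_wellQuasiOrderedLE E)
  set φ : (Fin n → ℕ) → A := fun α => if h : α ∈ E then h.choose else 0 with hφ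
  have hφ_spec : ∀ α ∈ E, φ α ∈ N ∧ φ α ≠ 0 ∧ S.IsLM (φ α) α := by
    intro α hα
    simp only [hφ, dif_pos hα]
    exact hα.choose_spec
  refine ⟨F.image φ, ?_⟩
  apply le_antisymm
  · rw [Submodule.span_le]
    intro x hx
    obtain ⟨α, hαF, rfl⟩ := Finset.mem_image.1 (by exact_mod_cast hx)
    exact (hφ_spec α (hFE hαF)).1
  · intro f hf
    rcases eq_or_ne f 0 with rfl | hf0
    · exact Submodule.zero_mem _
    obtain ⟨α, hα⟩ := exists_isLM S hf0
    -- well-founded induction on the leading exponent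
    have key : ∀ α : Fin n → ℕ, ∀ f, f ∈ N → S.IsLM f α →
        f ∈ Submodule.span A (↑(F.image φ) : Set A) := by
      intro α
      induction α using S.ord.wf.induction with
      | _ α IH =>
      intro f hfN hflm
      have hf0 : f ≠ 0 := by
        intro h
        have := hflm.1
        rw [h, map_zero] at this
        simp at this
      have hαE : α ∈ E := ⟨f, hfN, hf0, hflm⟩
      obtain ⟨α₀, hα₀F, hle⟩ := hdom α hαE
      obtain ⟨hgN, hg0, hglm⟩ := hφ_spec α₀ (hFE hα₀F)
      set g := φ α₀
      set γ : Fin n → ℕ := α - α₀ with hγdef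
      have hγ : γ + α₀ = α := funext fun i => Nat.sub_add_cancel (hle i)
      have hhlm : S.IsLM (S.basis γ * g) α := hγ ▸ isLM_basis_mul S γ hglm
      set h := S.basis γ * g with hh
      have hμ : S.basis.repr h α ≠ 0 := Finsupp.mem_support_iff.1 hhlm.1
      set c : K := S.basis.repr f α * (S.basis.repr h α)⁻¹ with hcdef
      have hgT : g ∈ F.image φ := Finset.mem_image_of_mem φ hα₀F
      have hg_span : g ∈ Submodule.span A (↑(F.image φ) : Set A) :=
        Submodule.subset_span (by exact_mod_cast hgT)
      have hch_span : c • h ∈ Submodule.span A (↑(F.image φ) : Set A) := by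
        have : c • h = ((c • S.basis γ) : A) • g := by
          rw [hh, smul_eq_mul, smul_mul_assoc]
        rw [this]
        exact Submodule.smul_mem _ _ hg_span
      have hchN : c • h ∈ N := by
        have : c • h = ((c • S.basis γ) : A) • g := by
          rw [hh, smul_eq_mul, smul_mul_assoc]
        rw [this]
        exact Submodule.smul_mem _ _ hgN
      set f' := f - c • h with hf'def
      have hf'N : f' ∈ N := Submodule.sub_mem _ hfN hchN
      have hreprα : S.basis.repr f' α = 0 := by
        rw [hf'def, map_sub, map_smul, Finsupp.sub_apply, Finsupp.smul_apply, smul_eq_mul,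
          hcdef, mul_assoc, inv_mul_cancel₀ hμ, mul_one, sub_self]
      rcases eq_or_ne f' 0 with hf'0 | hf'0
      · have : f = c • h := by
          have := sub_eq_zero.1 (hf'def ▸ hf'0)
          exact this
        rw [this]
        exact hch_span
      · obtain ⟨β, hβ⟩ := exists_isLM S hf'0
        have hβα : S.ord.lt β α := by
          have hβne : β ≠ α := by
            intro hh'
            exact Finsupp.mem_support_iff.1 hβ.1 (hh' ▸ hreprα)
          have hβmem : β ∈ (S.basis.repr f).support ∪ (S.basis.repr (c • h)).support := by
            apply Finsupp.support_sub
            rw [← map_sub]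
            exact hβ.1
          rcases Finset.mem_union.1 hβmem with hm | hm
          · exact hflm.2 β hm hβne
          · have : β ∈ (S.basis.repr h).support := by
              rw [map_smul] at hm
              exact Finsupp.support_smul hm
            rcases eq_or_ne β α with h' | h'
            · exact absurd h' hβne
            · exact hhlm.2 β this h'
        have hf'span := IH β hβα f' hf'N hβ
        have : f = f' + c • h := by rw [hf'def]; abel
        rw [this]
        exact Submodule.add_mem _ hf'span hch_span
    exact key α f hf hα

theorem left_noetherian (S : SolvAlg K A n) : IsNoetherianRing A :=
  isNoetherianRing_iff.2 (isNoetherian_def.2 fun N => submodule_fg S N)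


section Op

variable (n)

/-- Reverse the variables of an exponent vector. -/
def rv : (Fin n → ℕ) → (Fin n → ℕ) := fun α i => α i.rev

variable {n}

theorem rv_rv (α : Fin n → ℕ) : rv n (rv n α) = α :=
  funext fun i => congrArg α (Fin.rev_rev i)

theorem rv_inj : Function.Injective (rv n) := fun α β h => by
  rw [← rv_rv α, h, rv_rv]

theorem rv_add (α β : Fin n → ℕ) : rv n (α + β) = rv n α + rv n β := rfl

theorem rv_zero : rv n (0 : Fin n → ℕ) = 0 := rfl

variable (n)

/-- Reversal of variables as an equivalence. -/
def rvEquiv : (Fin n → ℕ) ≃ (Fin n → ℕ) := ⟨rv n, rv n, rv_rv, rv_rv⟩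

variable {n}

theorem solvMono_op (a : Fin n → A) (α : Fin n → ℕ) :
    SolvMono (fun i => op (a i.rev)) α = op (SolvMono a (rv n α)) := by
  unfold SolvMono
  have h1 : (List.map (fun i => op (a i.rev) ^ α i) (List.finRange n))
      = List.map op (List.map (fun i => a i.rev ^ α i) (List.finRange n)) := by
    rw [List.map_map]
    exact List.map_congr_left fun i _ => (MulOpposite.op_pow _ _).symm
  rw [h1]
  set L := List.map (fun i => a i.rev ^ α i) (List.finRange n) with hL
  have h2 : (List.map op L).prod = op (L.reverse.prod) := by
    rw [MulOpposite.op_list_prod, List.map_reverse, List.reverse_reverse]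
  rw [h2]
  congr 1
  rw [hL, ← List.map_reverse, List.finRange_reverse, List.map_map]
  congr 1
  exact List.map_congr_left fun j _ => by
    simp only [Function.comp_apply, Fin.rev_rev]
    rfl

theorem op_basis_repr (S : SolvAlg K A n) (x : A) (δ : Fin n → ℕ) :
    ((S.basis.map (opLinearEquiv K)).reindex (rvEquiv n)).repr (op x) δ
      = S.basis.repr x (rv n δ) := by
  rw [Module.Basis.repr_reindex_apply, Module.Basis.map_repr]
  rfl

theorem op_basis_apply (S : SolvAlg K A n) (α : Fin n → ℕ) :
    ((S.basis.map (opLinearEquiv K)).reindex (rvEquiv n)) α = op (S.basis (rv n α)) := by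
  rw [Module.Basis.reindex_apply, Module.Basis.map_apply]
  rfl

/-- The opposite of a solvable polynomial algebra is solvable, with reversed generators. -/
def opAlg (S : SolvAlg K A n) : SolvAlg K Aᵐᵒᵖ n where
  gen := fun i => op (S.gen i.rev)
  basis := (S.basis.map (opLinearEquiv K)).reindex (rvEquiv n)
  basis_eq := fun α => by
    rw [op_basis_apply, S.basis_eq, solvMono_op]
  ord :=
    { lt := fun α β => S.ord.lt (rv n α) (rv n β)
      wf := InvImage.wf (rv n) S.ord.wf
      lt_trans := fun h1 h2 => S.ord.lt_trans h1 h2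
      lt_total := fun α β => by
        rcases S.ord.lt_total (rv n α) (rv n β) with h | h | h
        · exact Or.inl h
        · exact Or.inr (Or.inl (rv_inj h))
        · exact Or.inr (Or.inr h)
      zero_min := fun α hα => by
        have h : rv n α ≠ 0 := fun h => hα (by rw [← rv_rv α, h, rv_zero])
        exact S.ord.zero_min (rv n α) h
      add_right := fun γ h => S.ord.add_right (rv n γ) h }
  s2_lc := fun α β => by
    rw [op_basis_apply, op_basis_apply, ← MulOpposite.op_mul, op_basis_repr]
    have h : rv n (α + β) = rv n β + rv n α := by rw [rv_add, add_comm]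
    rw [h]
    exact S.s2_lc (rv n β) (rv n α)
  s2_lower := fun α β δ hδ hne => by
    rw [Finsupp.mem_support_iff, op_basis_apply, op_basis_apply, ← MulOpposite.op_mul,
      op_basis_repr] at hδ
    have hδne : rv n δ ≠ rv n β + rv n α := by
      intro h
      apply hne
      have := congrArg (rv n) h
      rw [rv_rv, ← rv_add, rv_rv, add_comm] at this
      exact this
    have hlt := S.s2_lower (rv n β) (rv n α) (rv n δ) (Finsupp.mem_support_iff.2 hδ) hδne
    show S.ord.lt (rv n δ) (rv n (α + β))
    rw [rv_add, add_comm]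
    exact hlt

end Op

end SolvAlgProof

/-- Corollary 1.3.3: every solvable polynomial algebra is left and right Noetherian. -/
theorem solvAlg_noetherian {K : Type*} [Field K] {A : Type*} [Ring A] [Algebra K A]
    {n : ℕ} (S : SolvAlg K A n) :
    IsNoetherianRing A ∧ IsNoetherianRing Aᵐᵒᵖ :=
  ⟨SolvAlgProof.left_noetherian S, SolvAlgProof.left_noetherian (SolvAlgProof.opAlg S)⟩
end
end

section
/- Let K be a field, A = K[a_1,…,a_n] a finitely generated K-algebra with a minimal generating set {a_1,…,a_n}, and π: K⟨X_1,…,X_n⟩ → A the K-algebra epimorphism with π(X_i) = a_i, I = Ker π. Then A is a solvable polynomial algebra if and only if both of the following hold: (a) with respect to some monomial ordering ≺_X on the word basis 𝔹 of K⟨X_1,…,X_n⟩, the ideal I has a finite Gröbner basis, and the reduced Gröbner basis of I has the form 𝒢 = {g_{ji} = X_jX_i − λ_{ji}X_iX_j − F_{ji} | 1 ≤ i < j ≤ n} with LM(g_{ji}) = X_jX_i, λ_{ji} ∈ K∖{0}, and each F_{ji} a K-linear combination of ordered words X_1^{α_1}X_2^{α_2}···X_n^{α_n} — so that the cosets 𝔅̄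 = {X̄_1^{α_1}···X̄_n^{α_n} | α ∈ ℕ^n} form a PBW K-basis of A = K⟨X_1,…,X_n⟩/I; and (b) there is a monomial ordering ≺ on the PBW basis 𝔅̄ such that LM(F̄_{ji}) ≺ X̄_iX̄_j whenever F̄_{ji} ≠ 0, where F̄_{ji} is the image of F_{ji} in A. -/
noncomputable section

open scoped BigOperators

/-- A monomial ordering on the word basis `𝔹 = FreeMonoid (Fin n)` of the free algebra:
a well-ordering compatible with two-sided multiplication of words such that proper
subwords are smaller. -/
structure WordOrder (n : ℕ) where
  lt : FreeMonoid (Fin n) → FreeMonoid (Fin n) → Prop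
  wf : WellFounded lt
  lt_trans : ∀ {U V W}, lt U V → lt V W → lt U W
  lt_total : ∀ U V, lt U V ∨ U = V ∨ lt V U
  mul_compat : ∀ (W Z U V : FreeMonoid (Fin n)), lt U V → lt (W * U * Z) (W * V * Z)
  subword : ∀ (W Z U V : FreeMonoid (Fin n)), V = W * U * Z → U ≠ V → lt U V

namespace Free9

variable {K : Type*} [Field K] {n : ℕ}

/-- The word basis of the free algebra. -/
noncomputable def wB (K : Type*) [Field K] (n : ℕ) :
    Module.Basis (FreeMonoid (Fin n)) K (FreeAlgebra K (Fin n)) :=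
  FreeAlgebra.basisFreeMonoid K (Fin n)

/-- `U` is the leading word of the nonzero element `F` of the free algebra. -/
def IsLMX (O : WordOrder n) (F : FreeAlgebra K (Fin n)) (U : FreeMonoid (Fin n)) : Prop :=
  U ∈ ((wB K n).repr F).support ∧ ∀ V ∈ ((wB K n).repr F).support, V ≠ U → O.lt V U

/-- A word `U` divides a word `V` if `V = W * U * Z` for some words `W, Z`. -/
def WDvd (U V : FreeMonoid (Fin n)) : Prop := ∃ W Z, V = W * U * Z

/-- `G` is a (two-sided) Gröbner basis of the two-sided ideal specified by `I` (as a set). -/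
def IsGBX (O : WordOrder n) (I : Set (FreeAlgebra K (Fin n)))
    (G : Set (FreeAlgebra K (Fin n))) : Prop :=
  G ⊆ I ∧ (0 : FreeAlgebra K (Fin n)) ∉ G ∧
    ∀ F ∈ I, F ≠ 0 → ∃ g ∈ G, ∃ U V, IsLMX O g U ∧ IsLMX O F V ∧ WDvd U V

/-- Normal words modulo `G`. -/
def NormalWords (O : WordOrder n) (G : Set (FreeAlgebra K (Fin n))) :
    Set (FreeMonoid (Fin n)) :=
  {W | ∀ g ∈ G, ∀ U, IsLMX O g U → ¬ WDvd U W}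

/-- A minimal Gröbner basis. -/
def IsMinGBX (O : WordOrder n) (I G : Set (FreeAlgebra K (Fin n))) : Prop :=
  IsGBX O I G ∧ ∀ G' : Set (FreeAlgebra K (Fin n)), G' ⊂ G → ¬ IsGBX O I G'

/-- A reduced Gröbner basis: minimal, monic and with normal tails. -/
def IsRedGBX (O : WordOrder n) (I G : Set (FreeAlgebra K (Fin n))) : Prop :=
  IsMinGBX O I G ∧
  (∀ g ∈ G, ∀ U, IsLMX O g U → (wB K n).repr g U = 1) ∧
  (∀ g ∈ G, ∀ U, IsLMX O g U →
    g - wB K n U ∈ Submodule.span K ((fun W => wB K n W) '' NormalWords O G))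

/-- The ordered word `X_1^{α 1} ⋯ X_n^{α n}`. -/
def ordWord (n : ℕ) (α : Fin n → ℕ) : FreeMonoid (Fin n) :=
  ((List.finRange n).map fun i => (FreeMonoid.of i) ^ (α i)).prod

end Free9

namespace Thm9
open Free9

variable {n : ℕ}

/-- Abelianization of a word: the exponent vector. -/
def ab (U : FreeMonoid (Fin n)) : Fin n → ℕ := fun i => (FreeMonoid.toList U).count i

lemma ab_mul (U V : FreeMonoid (Fin n)) : ab (U * V) = ab U + ab V := by
  funext i; simp [ab, FreeMonoid.toList_mul, List.count_append]

lemma ab_one : ab (1 : FreeMonoid (Fin n)) = 0 := by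
  funext i; simp [ab, FreeMonoid.toList_one]

lemma ab_of (i : Fin n) : ab (FreeMonoid.of i) = Pi.single i 1 := by
  funext j
  simp only [ab, FreeMonoid.toList_of, List.count_singleton]
  by_cases h : j = i
  · subst h; simp
  · rw [Pi.single_apply]; simp [h, Ne.symm h, beq_iff_eq]

lemma toList_pow (i : Fin n) (k : ℕ) :
    FreeMonoid.toList (FreeMonoid.of i ^ k) = List.replicate k i := by
  induction k with
  | zero => simp [FreeMonoid.toList_one]
  | succ k ih => rw [pow_succ, FreeMonoid.toList_mul, ih, FreeMonoid.toList_of,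
      List.replicate_succ']

lemma toList_listProd (l : List (FreeMonoid (Fin n))) :
    FreeMonoid.toList l.prod = (l.map FreeMonoid.toList).flatten := by
  induction l with
  | nil => simp [FreeMonoid.toList_one]
  | cons a t ih => simp [FreeMonoid.toList_mul, ih]

lemma ordWord_toList (m : Fin n → ℕ) :
    FreeMonoid.toList (ordWord n m)
      = ((List.finRange n).map fun i => List.replicate (m i) i).flatten := by
  rw [ordWord, toList_listProd, List.map_map]
  congr 1
  refine List.map_congr_left fun i _ => ?_
  exact toList_pow i (m i)

lemma ab_ordWord (m : Fin n → ℕ) : ab (ordWord n m) = m := by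
  funext j
  simp only [ab, ordWord_toList, List.count_flatten, List.map_map]
  have : ∀ i : Fin n, (List.count j ∘ fun i => List.replicate (m i) i) i
      = (Pi.single i (m i) : Fin n → ℕ) j := by
    intro i
    simp only [Function.comp_apply, List.count_replicate]
    by_cases h : i = j
    · subst h; simp
    · rw [Pi.single_apply]; simp only [beq_iff_eq]
      rw [if_neg h, if_neg (fun hh : j = i => h hh.symm)]
  rw [List.map_congr_left fun i _ => this i, ← Fin.sum_univ_def]
  classical
  rw [Finset.sum_pi_single]
  simp

/-- Sortedness of a word. -/
def Srt (U : FreeMonoid (Fin n)) : Prop := List.Pairwise (· ≤ ·) (FreeMonoid.toList U)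

lemma srt_ordWord (m : Fin n → ℕ) : Srt (ordWord n m) := by
  rw [Srt, ordWord_toList, List.pairwise_flatten]
  constructor
  · intro l hl
    simp only [List.mem_map] at hl
    obtain ⟨i, _, rfl⟩ := hl
    rw [List.pairwise_replicate]
    right; exact le_refl i
  · rw [List.pairwise_map]
    refine List.Pairwise.imp ?_ (List.pairwise_lt_finRange n)
    intro i j hij x hx y hy
    rw [List.eq_of_mem_replicate hx, List.eq_of_mem_replicate hy]
    exact le_of_lt hij

lemma srt_eq_ordWord {U : FreeMonoid (Fin n)} (h : Srt U) : U = ordWord n (ab U) := by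
  apply FreeMonoid.toList.injective
  apply List.Perm.eq_of_pairwise' h (srt_ordWord (ab U))
  rw [List.perm_iff_count]
  intro a
  have := congrFun (ab_ordWord (ab U)) a
  simpa [ab] using this.symm

lemma ordWord_mem_range_iff (U : FreeMonoid (Fin n)) :
    U ∈ Set.range (ordWord n) ↔ Srt U := by
  constructor
  · rintro ⟨m, rfl⟩; exact srt_ordWord m
  · intro h; exact ⟨ab U, (srt_eq_ordWord h).symm⟩

lemma ab_eq_zero_iff (U : FreeMonoid (Fin n)) : ab U = 0 ↔ U = 1 := by
  constructor
  · intro h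
    have : FreeMonoid.toList U = [] := by
      rcases List.eq_nil_or_concat (FreeMonoid.toList U) with h' | ⟨l, a, h'⟩
      · exact h'
      · exfalso
        have ha : (FreeMonoid.toList U).count a ≠ 0 := by
          rw [h']; simp [List.count_append]
        exact ha (congrFun h a)
    apply FreeMonoid.toList.injective
    rw [this, FreeMonoid.toList_one]
  · rintro rfl; exact ab_one

/-- Every word is sorted or contains an adjacent descent. -/
lemma sorted_or_descent (l : List (Fin n)) :
    l.Pairwise (· ≤ ·) ∨ ∃ (W Z : List (Fin n)) (i j : Fin n),
      i < j ∧ l = W ++ j :: i :: Z := by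
  induction l with
  | nil => left; exact List.Pairwise.nil
  | cons x t ih =>
    rcases ih with hsort | ⟨W, Z, i, j, hij, rfl⟩
    · cases t with
      | nil => left; simp
      | cons y t' =>
        by_cases hxy : x ≤ y
        · left
          rw [List.pairwise_cons]
          refine ⟨?_, hsort⟩
          intro b hb
          rcases List.mem_cons.mp hb with rfl | hb
          · exact hxy
          · exact le_trans hxy (List.rel_of_pairwise_cons hsort hb)
        · right
          exact ⟨[], t', y, x, lt_of_not_ge hxy, rfl⟩
    · right; exact ⟨x :: W, Z, i, j, hij, rfl⟩

/-- A sorted list is lexicographically minimal among its permutations. -/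
lemma sorted_lex_min : ∀ (S U : List (Fin n)), S.Pairwise (· ≤ ·) → S.Perm U →
    S = U ∨ List.Lex (· < ·) S U := by
  intro S
  induction S with
  | nil => intro U _ hp; left; exact (hp.nil_eq).symm ▸ rfl
  | cons s S' ih =>
    intro U hs hp
    match U with
    | [] => exact absurd hp.symm.nil_eq (by simp)
    | u :: U' =>
      have hsu : s ≤ u ∨ s = u := by
        have hu : u ∈ s :: S' := hp.symm.subset (by simp)
        rcases List.mem_cons.mp hu with rfl | hu
        · right; rfl
        · left; exact List.rel_of_pairwise_cons hs hu
      by_cases heq : s = u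
      · subst heq
        have hp' : S'.Perm U' := hp.cons_inv
        rcases ih U' (List.pairwise_cons.mp hs).2 hp' with h | h
        · left; rw [h]
        · right; exact List.Lex.cons h
      · have hlt : s < u := by
          rcases hsu with h | h
          · exact lt_of_le_of_ne h heq
          · exact absurd h heq
        right; exact List.Lex.rel hlt

end Thm9

namespace Thm9
open Free9

variable {n : ℕ}

/-- Lexicographic order on words. -/
def wlex (U V : FreeMonoid (Fin n)) : Prop :=
  List.Lex (· < ·) (FreeMonoid.toList U) (FreeMonoid.toList V)

lemma wlex_trans {U V W : FreeMonoid (Fin n)} (h1 : wlex U V) (h2 : wlex V W) : wlex U W := by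
  have : IsTrans (List (Fin n)) (List.Lex (· < ·)) := by
    have := isStrictWeakOrder_of_isOrderConnected (α := List (Fin n)) (r := List.Lex (· < ·))
    exact this.toIsStrictOrder.toIsTrans
  exact this.trans _ _ _ h1 h2

lemma wlex_asymm {U V : FreeMonoid (Fin n)} (h1 : wlex U V) : ¬ wlex V U :=
  (List.Lex.asymm (α := Fin n) (· < ·)).asymm _ _ h1

lemma wlex_irrefl (U : FreeMonoid (Fin n)) : ¬ wlex U U := fun h => wlex_asymm h h

lemma wlex_total (U V : FreeMonoid (Fin n)) : wlex U V ∨ U = V ∨ wlex V U := by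
  rcases trichotomous_of (List.Lex (α := Fin n) (· < ·))
    (FreeMonoid.toList U) (FreeMonoid.toList V) with h | h | h
  · exact Or.inl h
  · exact Or.inr (Or.inl (FreeMonoid.toList.injective h))
  · exact Or.inr (Or.inr h)

lemma lex_append_right {α : Type*} (r : α → α → Prop) :
    ∀ {U V : List α} (Z : List α), U.length = V.length → List.Lex r U V →
      List.Lex r (U ++ Z) (V ++ Z) := by
  intro U V Z hlen h
  induction h with
  | nil => simp at hlen
  | @cons a l₁ l₂ h ih =>
    exact List.Lex.cons (ih (by simpa using hlen))
  | rel h => exact List.Lex.rel h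

lemma ab_perm {U V : FreeMonoid (Fin n)} (h : ab U = ab V) :
    (FreeMonoid.toList U).Perm (FreeMonoid.toList V) := by
  rw [List.perm_iff_count]; intro a; exact congrFun h a

lemma ab_length_eq {U V : FreeMonoid (Fin n)} (h : ab U = ab V) :
    (FreeMonoid.toList U).length = (FreeMonoid.toList V).length :=
  (ab_perm h).length_eq

lemma wlex_mul {W Z U V : FreeMonoid (Fin n)} (h : wlex U V) (hab : ab U = ab V) :
    wlex (W * U * Z) (W * V * Z) := by
  unfold wlex
  rw [FreeMonoid.toList_mul, FreeMonoid.toList_mul, FreeMonoid.toList_mul,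
    FreeMonoid.toList_mul, List.append_assoc, List.append_assoc]
  apply List.Lex.append_left
  exact lex_append_right _ _ (ab_length_eq hab) h

/-- MonOrder helper lemmas -/
lemma _root_.MonOrder.irrefl (M : MonOrder n) (m : Fin n → ℕ) : ¬ M.lt m m := by
  intro h
  exact (M.wf.apply m).rec (fun a _ ih hh => ih a hh hh) h

lemma _root_.MonOrder.asymm (M : MonOrder n) {x y : Fin n → ℕ} (h : M.lt x y) : ¬ M.lt y x :=
  fun h' => M.irrefl x (M.lt_trans h h')

lemma _root_.MonOrder.add_left (M : MonOrder n) {x y : Fin n → ℕ} (γ : Fin n → ℕ) (h : M.lt x y) :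
    M.lt (γ + x) (γ + y) := by
  rw [add_comm γ x, add_comm γ y]; exact M.add_right γ h

lemma _root_.MonOrder.add_both (M : MonOrder n) {x y : Fin n → ℕ} (γ δ : Fin n → ℕ) (h : M.lt x y) :
    M.lt (γ + x + δ) (γ + y + δ) :=
  M.add_right δ (M.add_left γ h)

/-- Existence of a maximum in a finite nonempty set for a total transitive relation. -/
lemma exists_rmax {α : Type*} (r : α → α → Prop)
    (htrans : ∀ {a b c}, r a b → r b c → r a c)
    (htot : ∀ a b, r a b ∨ a = b ∨ r b a) (s : Finset α) (hs : s.Nonempty) :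
    ∃ m ∈ s, ∀ x ∈ s, x ≠ m → r x m := by
  classical
  induction s using Finset.induction with
  | empty => exact absurd hs (by simp)
  | @insert a s ha ih =>
    rcases s.eq_empty_or_nonempty with rfl | hs'
    · exact ⟨a, by simp, by simp⟩
    · obtain ⟨m, hm, hmax⟩ := ih hs'
      rcases htot a m with h | h | h
      · refine ⟨m, by simp [hm], ?_⟩
        intro x hx hxm
        rcases Finset.mem_insert.mp hx with rfl | hx
        · exact h
        · exact hmax x hx hxm
      · subst h
        refine ⟨a, by simp, ?_⟩
        intro x hx hxm
        rcases Finset.mem_insert.mp hx with rfl | hx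
        · exact absurd rfl hxm
        · exact hmax x hx hxm
      · refine ⟨a, by simp, ?_⟩
        intro x hx hxa
        rcases Finset.mem_insert.mp hx with rfl | hx
        · exact absurd rfl hxa
        · by_cases hxm : x = m
          · subst hxm; exact h
          · exact htrans (hmax x hx hxm) h

end Thm9

namespace Thm9
open Free9

variable (K : Type*) [Field K] {n : ℕ}

lemma wB_apply (W : FreeMonoid (Fin n)) :
    wB K n W = (FreeAlgebra.equivMonoidAlgebraFreeMonoid (R := K) (X := Fin n)).symm
      (MonoidAlgebra.single W 1) := by
  rw [wB, FreeAlgebra.basisFreeMonoid, Module.Basis.map_apply]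
  have h1 : (Finsupp.basisSingleOne (R := K) (ι := FreeMonoid (Fin n))) W
      = Finsupp.single W 1 := by rw [Finsupp.coe_basisSingleOne]
  rw [h1]
  rfl

lemma wB_one : wB K n 1 = 1 := by
  rw [wB_apply, ← MonoidAlgebra.one_def, map_one]

lemma wB_mul (U V : FreeMonoid (Fin n)) : wB K n (U * V) = wB K n U * wB K n V := by
  rw [wB_apply, wB_apply, wB_apply, ← map_mul, MonoidAlgebra.single_mul_single, one_mul]

lemma wB_of (i : Fin n) : wB K n (FreeMonoid.of i) = FreeAlgebra.ι K i := by
  rw [wB_apply, AlgEquiv.symm_apply_eq]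
  rw [FreeAlgebra.equivMonoidAlgebraFreeMonoid]
  simp [FreeAlgebra.lift_ι_apply, MonoidAlgebra.of_apply]

/-- `wB` as a monoid homomorphism on words. -/
def wBm : FreeMonoid (Fin n) →* FreeAlgebra K (Fin n) where
  toFun := wB K n
  map_one' := wB_one K
  map_mul' := wB_mul K

lemma wB_ordWord (m : Fin n → ℕ) :
    wB K n (ordWord n m)
      = ((List.finRange n).map fun i => (FreeAlgebra.ι K i) ^ (m i)).prod := by
  have : wB K n (ordWord n m) = wBm K (ordWord n m) := rfl
  rw [this, ordWord, map_list_prod, List.map_map]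
  congr 1
  refine List.map_congr_left fun i _ => ?_
  simp only [Function.comp_apply, map_pow]
  congr 1
  exact wB_of K i

lemma lift_wB_ordWord {A : Type*} [Ring A] [Algebra K A] (a : Fin n → A) (m : Fin n → ℕ) :
    FreeAlgebra.lift K a (wB K n (ordWord n m)) = SolvMono a m := by
  rw [wB_ordWord, map_list_prod, List.map_map, SolvMono]
  congr 1
  refine List.map_congr_left fun i _ => ?_
  simp [FreeAlgebra.lift_ι_apply]

lemma wB_repr_self (W : FreeMonoid (Fin n)) :
    (wB K n).repr (wB K n W) = Finsupp.single W 1 := Module.Basis.repr_self _ _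

end Thm9

namespace Thm9
open Free9

variable {K : Type*} [Field K] {A : Type*} [Ring A] [Algebra K A] {n : ℕ}

section LeadLower

variable (B : Module.Basis (Fin n → ℕ) K A) (M : MonOrder n)

/-- All monomials of `x` are `M`-below `m`. -/
def Lower (m : Fin n → ℕ) (x : A) : Prop := ∀ δ ∈ (B.repr x).support, M.lt δ m

/-- `m` is the leading exponent of `x`. -/
def Lead (x : A) (m : Fin n → ℕ) : Prop :=
  B.repr x m ≠ 0 ∧ ∀ δ ∈ (B.repr x).support, δ ≠ m → M.lt δ m

variable {B M}

lemma lower_zero (m : Fin n → ℕ) : Lower B M m 0 := by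
  intro δ hδ; simp at hδ

lemma lower_add {m : Fin n → ℕ} {x y : A} (hx : Lower B M m x) (hy : Lower B M m y) :
    Lower B M m (x + y) := by
  intro δ hδ
  rw [map_add] at hδ
  rcases Finset.mem_union.mp (Finsupp.support_add hδ) with h | h
  · exact hx δ h
  · exact hy δ h

lemma lower_smul {m : Fin n → ℕ} {x : A} (c : K) (hx : Lower B M m x) :
    Lower B M m (c • x) := by
  intro δ hδ
  rw [map_smul] at hδ
  exact hx δ (Finsupp.support_smul hδ)

lemma lower_sum {m : Fin n → ℕ} {ι : Type*} (s : Finset ι) (f : ι → A)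
    (h : ∀ i ∈ s, Lower B M m (f i)) : Lower B M m (∑ i ∈ s, f i) := by
  classical
  induction s using Finset.induction with
  | empty => simpa using lower_zero m
  | @insert a s ha ih =>
    rw [Finset.sum_insert ha]
    exact lower_add (h a (by simp)) (ih fun i hi => h i (by simp [hi]))

lemma lower_of_lead {m m' : Fin n → ℕ} {x : A} (hx : Lead B M x m') (h : M.lt m' m) :
    Lower B M m x := by
  intro δ hδ
  by_cases hδm : δ = m'
  · subst hδm; exact h
  · exact M.lt_trans (hx.2 δ hδ hδm) h

lemma lead_basis (m : Fin n → ℕ) : Lead B M (B m) m := by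
  constructor
  · rw [B.repr_self]; simp
  · intro δ hδ hne
    rw [B.repr_self] at hδ
    exact absurd (Finset.mem_singleton.mp (Finsupp.support_single_subset hδ)) hne

lemma lead_smul {m : Fin n → ℕ} {x : A} {c : K} (hc : c ≠ 0) (hx : Lead B M x m) :
    Lead B M (c • x) m := by
  constructor
  · rw [map_smul]; simpa using mul_ne_zero hc hx.1
  · intro δ hδ hne
    rw [map_smul] at hδ
    exact hx.2 δ (Finsupp.support_smul hδ) hne

lemma repr_eq_zero_of_lower {m : Fin n → ℕ} {y : A} (hy : Lower B M m y) :
    B.repr y m = 0 := by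
  by_contra h
  exact M.irrefl m (hy m (Finsupp.mem_support_iff.mpr h))

lemma lead_add_lower {m : Fin n → ℕ} {x y : A} (hx : Lead B M x m) (hy : Lower B M m y) :
    Lead B M (x + y) m := by
  constructor
  · rw [map_add, Finsupp.add_apply, repr_eq_zero_of_lower hy, add_zero]
    exact hx.1
  · intro δ hδ hne
    rw [map_add] at hδ
    rcases Finset.mem_union.mp (Finsupp.support_add hδ) with h | h
    · exact hx.2 δ h hne
    · exact hy δ h

end LeadLower

/-- The key induction: modulo the commutation relations, every word has image with
leading exponent its abelianization. -/
theorem key (B : Module.Basis (Fin n → ℕ) K A) (M : MonOrder n) (O : WordOrder n)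
    (π : FreeAlgebra K (Fin n) →ₐ[K] A)
    (hB : ∀ m, π (wB K n (ordWord n m)) = B m)
    (rel : ∀ i j : Fin n, i < j → ∃ (lam : K) (F : FreeAlgebra K (Fin n)),
      lam ≠ 0 ∧
      π (wB K n (FreeMonoid.of j * FreeMonoid.of i))
        = lam • π (wB K n (FreeMonoid.of i * FreeMonoid.of j)) + π F ∧
      O.lt (FreeMonoid.of i * FreeMonoid.of j) (FreeMonoid.of j * FreeMonoid.of i) ∧
      (∀ V ∈ ((wB K n).repr F).support,
        O.lt V (FreeMonoid.of j * FreeMonoid.of i) ∧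
        ∃ δ, V = ordWord n δ ∧ M.lt δ (ab (FreeMonoid.of j * FreeMonoid.of i)))) :
    ∀ U : FreeMonoid (Fin n), Lead B M (π (wB K n U)) (ab U) := by
  intro U
  induction U using O.wf.induction with
  | _ U ih =>
  rcases sorted_or_descent (FreeMonoid.toList U) with hs | ⟨W, Z, i, j, hij, hdec⟩
  · have hU : U = ordWord n (ab U) := srt_eq_ordWord hs
    have : π (wB K n U) = B (ab U) := by
      conv_lhs => rw [hU]
      exact hB (ab U)
    rw [this]
    exact lead_basis (ab U)
  · set Wm := FreeMonoid.ofList W with hWm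
    set Zm := FreeMonoid.ofList Z with hZm
    have hU : U = Wm * (FreeMonoid.of j * FreeMonoid.of i) * Zm := by
      apply FreeMonoid.toList.injective
      simp only [FreeMonoid.toList_mul, FreeMonoid.toList_of, hWm, hZm,
        FreeMonoid.toList_ofList, hdec]
      simp
    obtain ⟨lam, F, hlam, heq, hltij, hsupp⟩ := rel i j hij
    -- the rewritten expression
    have hmain : π (wB K n U)
        = lam • π (wB K n (Wm * (FreeMonoid.of i * FreeMonoid.of j) * Zm))
          + π (wB K n Wm) * π F * π (wB K n Zm) := by
      conv_lhs => rw [hU, wB_mul, wB_mul, map_mul, map_mul, heq]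
      conv_rhs => rw [wB_mul, wB_mul, map_mul, map_mul]
      rw [mul_add, add_mul, mul_smul_comm, smul_mul_assoc]
    have habji : ab (FreeMonoid.of j * FreeMonoid.of i)
        = ab (FreeMonoid.of i * FreeMonoid.of j) := by
      rw [ab_mul, ab_mul, add_comm]
    have habU : ab U = ab Wm + ab (FreeMonoid.of j * FreeMonoid.of i) + ab Zm := by
      rw [hU, ab_mul, ab_mul]
    -- main term
    have hltmain : O.lt (Wm * (FreeMonoid.of i * FreeMonoid.of j) * Zm) U := by
      rw [hU]; exact O.mul_compat Wm Zm _ _ hltij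
    have hleadmain : Lead B M
        (π (wB K n (Wm * (FreeMonoid.of i * FreeMonoid.of j) * Zm))) (ab U) := by
      have := ih _ hltmain
      have hab : ab (Wm * (FreeMonoid.of i * FreeMonoid.of j) * Zm) = ab U := by
        rw [ab_mul, ab_mul, habU, habji]
      rwa [hab] at this
    -- tail term
    have hF : F = ((wB K n).repr F).sum fun V c => c • wB K n V := by
      conv_lhs => rw [← (wB K n).linearCombination_repr F]
      rw [Finsupp.linearCombination_apply]
    have hT : π (wB K n Wm) * π F * π (wB K n Zm)
        = ∑ V ∈ ((wB K n).repr F).support,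
            ((wB K n).repr F) V • π (wB K n (Wm * V * Zm)) := by
      conv_lhs => rw [hF]
      rw [Finsupp.sum, map_sum, Finset.mul_sum, Finset.sum_mul]
      refine Finset.sum_congr rfl fun V hV => ?_
      rw [map_smul, mul_smul_comm, smul_mul_assoc, wB_mul, wB_mul, map_mul, map_mul]
    have hlow : Lower B M (ab U) (π (wB K n Wm) * π F * π (wB K n Zm)) := by
      rw [hT]
      apply lower_sum
      intro V hV
      obtain ⟨hVlt, δ, hVδ, hδlt⟩ := hsupp V hV
      apply lower_smul
      apply lower_of_lead (ih _ (by rw [hU]; exact O.mul_compat Wm Zm _ _ hVlt))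
      rw [ab_mul, ab_mul, habU, hVδ, ab_ordWord]
      exact M.add_both _ _ hδlt
    rw [hmain]
    exact lead_add_lower (lead_smul hlam hleadmain) hlow

end Thm9

namespace Thm9
open Free9

variable {K : Type*} [Field K] {A : Type*} [Ring A] [Algebra K A] {n : ℕ}

lemma repr_pi_comb (B : Module.Basis (Fin n → ℕ) K A) (π : FreeAlgebra K (Fin n) →ₐ[K] A)
    (hB : ∀ m, π (wB K n (ordWord n m)) = B m) (F : FreeAlgebra K (Fin n))
    (hsupp : ∀ W ∈ ((wB K n).repr F).support, W ∈ Set.range (ordWord n)) (δ : Fin n → ℕ) :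
    B.repr (π F) δ = (wB K n).repr F (ordWord n δ) := by
  classical
  have hF : F = ((wB K n).repr F).sum fun V c => c • wB K n V := by
    conv_lhs => rw [← (wB K n).linearCombination_repr F]
    rw [Finsupp.linearCombination_apply]
  have hπ : π F = ∑ V ∈ ((wB K n).repr F).support, ((wB K n).repr F) V • π (wB K n V) := by
    conv_lhs => rw [hF]
    rw [Finsupp.sum, map_sum]
    exact Finset.sum_congr rfl fun V _ => map_smul _ _ _
  have hval : ∀ V ∈ ((wB K n).repr F).support, π (wB K n V) = B (ab V) := by
    intro V hV
    obtain ⟨m, rfl⟩ := hsupp V hV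
    rw [ab_ordWord]
    exact hB m
  rw [hπ]
  rw [map_sum, Finsupp.coe_finset_sum, Finset.sum_apply]
  have hterm : ∀ V ∈ ((wB K n).repr F).support,
      (B.repr (((wB K n).repr F) V • π (wB K n V))) δ
        = if ab V = δ then ((wB K n).repr F) V else 0 := by
    intro V hV
    rw [hval V hV, map_smul, B.repr_self, Finsupp.smul_apply, Finsupp.single_apply]
    split <;> simp
  rw [Finset.sum_congr rfl hterm]
  by_cases hmem : ordWord n δ ∈ ((wB K n).repr F).support
  · rw [Finset.sum_eq_single_of_mem (ordWord n δ) hmem]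
    · rw [if_pos (ab_ordWord δ)]
    · intro V hV hne
      rw [if_neg]
      intro habV
      obtain ⟨m, rfl⟩ := hsupp V hV
      rw [ab_ordWord] at habV
      exact hne (by rw [habV])
  · rw [Finset.sum_eq_zero, (Finsupp.notMem_support_iff.mp hmem)]
    intro V hV
    rw [if_neg]
    intro habV
    obtain ⟨m, rfl⟩ := hsupp V hV
    rw [ab_ordWord] at habV
    exact hmem (by rw [← habV]; exact hV)

lemma srt_of_ij {i j : Fin n} (hij : i < j) : Srt (FreeMonoid.of i * FreeMonoid.of j) := by
  rw [Srt, FreeMonoid.toList_mul, FreeMonoid.toList_of, FreeMonoid.toList_of]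
  simp [le_of_lt hij]

lemma ab_ij {i j : Fin n} : ab (FreeMonoid.of i * FreeMonoid.of j)
    = Pi.single i 1 + Pi.single j 1 := by
  rw [ab_mul, ab_of, ab_of]

lemma ordWord_ij {i j : Fin n} (hij : i < j) :
    ordWord n (Pi.single i 1 + Pi.single j 1) = FreeMonoid.of i * FreeMonoid.of j := by
  have := srt_eq_ordWord (srt_of_ij hij)
  rw [ab_ij] at this
  exact this.symm

lemma not_srt_ji {i j : Fin n} (hij : i < j) : ¬ Srt (FreeMonoid.of j * FreeMonoid.of i) := by
  rw [Srt, FreeMonoid.toList_mul, FreeMonoid.toList_of, FreeMonoid.toList_of]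
  intro h
  have : j ≤ i := by
    simpa using List.rel_of_pairwise_cons h (a' := i) (by simp)
  exact absurd hij (not_lt_of_ge this)

lemma ji_ne_ij {i j : Fin n} (hij : i < j) :
    FreeMonoid.of j * FreeMonoid.of i ≠ FreeMonoid.of i * FreeMonoid.of j := by
  intro h
  have := congrArg FreeMonoid.toList h
  simp only [FreeMonoid.toList_mul, FreeMonoid.toList_of] at this
  exact absurd (List.head_eq_of_cons_eq this).symm (ne_of_lt hij)

theorem backward (a : Fin n → A) (O : WordOrder n) (lam : Fin n → Fin n → K)
    (Fm : Fin n → Fin n → FreeAlgebra K (Fin n))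
    (hlam : ∀ i j : Fin n, i < j → lam j i ≠ 0)
    (hker : ∀ i j : Fin n, i < j → FreeAlgebra.lift K a
      (FreeAlgebra.ι K j * FreeAlgebra.ι K i
        - lam j i • (FreeAlgebra.ι K i * FreeAlgebra.ι K j) - Fm j i) = 0)
    (hLM : ∀ i j : Fin n, i < j →
      Free9.IsLMX O (FreeAlgebra.ι K j * FreeAlgebra.ι K i
        - lam j i • (FreeAlgebra.ι K i * FreeAlgebra.ι K j) - Fm j i)
        (FreeMonoid.of j * FreeMonoid.of i))
    (hFsupp : ∀ i j : Fin n, i < j → ∀ W ∈ ((wB K n).repr (Fm j i)).support,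
      W ∈ Set.range (ordWord n))
    (B : Module.Basis (Fin n → ℕ) K A) (hBa : ∀ α, B α = SolvMono a α)
    (Ord : MonOrder n)
    (hOrd : ∀ i j : Fin n, i < j →
      ∀ δ ∈ (B.repr (FreeAlgebra.lift K a (Fm j i))).support,
        Ord.lt δ (Pi.single i 1 + Pi.single j 1)) :
    ∃ S : SolvAlg K A n, S.gen = a := by
  classical
  set π := FreeAlgebra.lift K a with hπ
  have hB : ∀ m, π (wB K n (ordWord n m)) = B m := by
    intro m
    rw [lift_wB_ordWord, hBa]
  have hιι : ∀ (p q : Fin n), FreeAlgebra.ι K p * FreeAlgebra.ι K q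
      = wB K n (FreeMonoid.of p * FreeMonoid.of q) := by
    intro p q
    rw [wB_mul, wB_of, wB_of]
  -- set up the relations for `key`
  have rel : ∀ i j : Fin n, i < j → ∃ (lm : K) (F : FreeAlgebra K (Fin n)),
      lm ≠ 0 ∧
      π (wB K n (FreeMonoid.of j * FreeMonoid.of i))
        = lm • π (wB K n (FreeMonoid.of i * FreeMonoid.of j)) + π F ∧
      O.lt (FreeMonoid.of i * FreeMonoid.of j) (FreeMonoid.of j * FreeMonoid.of i) ∧
      (∀ V ∈ ((wB K n).repr F).support,
        O.lt V (FreeMonoid.of j * FreeMonoid.of i) ∧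
        ∃ δ, V = ordWord n δ ∧ Ord.lt δ (ab (FreeMonoid.of j * FreeMonoid.of i))) := by
    intro i j hij
    set g := FreeAlgebra.ι K j * FreeAlgebra.ι K i
      - lam j i • (FreeAlgebra.ι K i * FreeAlgebra.ι K j) - Fm j i with hg
    set d := (wB K n).repr (Fm j i) with hd
    have hreprg : ∀ V, (wB K n).repr g V
        = (Finsupp.single (FreeMonoid.of j * FreeMonoid.of i) (1:K)) V
          - lam j i * (Finsupp.single (FreeMonoid.of i * FreeMonoid.of j) (1:K)) V - d V := by
      intro V
      rw [hg, map_sub, map_sub, map_smul, hιι, hιι, wB_repr_self, wB_repr_self]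
      simp [Finsupp.sub_apply, Finsupp.smul_apply, Finsupp.single_apply, mul_ite]
      rfl
    have hreprpi : ∀ δ, B.repr (π (Fm j i)) δ = d (ordWord n δ) :=
      repr_pi_comb B π hB (Fm j i) (hFsupp i j hij)
    -- the coefficient of the sorted word `X_i X_j` in `Fm j i` vanishes
    have hdij : d (FreeMonoid.of i * FreeMonoid.of j) = 0 := by
      by_contra hne
      have h1 : B.repr (π (Fm j i)) (Pi.single i 1 + Pi.single j 1) ≠ 0 := by
        rw [hreprpi, ordWord_ij hij]; exact hne
      have := hOrd i j hij _ (Finsupp.mem_support_iff.mpr h1)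
      exact Ord.irrefl _ this
    have hdji : d (FreeMonoid.of j * FreeMonoid.of i) = 0 := by
      by_contra hne
      have : FreeMonoid.of j * FreeMonoid.of i ∈ Set.range (ordWord n) :=
        hFsupp i j hij _ (Finsupp.mem_support_iff.mpr hne)
      exact not_srt_ji hij ((ordWord_mem_range_iff _).mp this)
    have hgij : (wB K n).repr g (FreeMonoid.of i * FreeMonoid.of j) = - lam j i := by
      rw [hreprg, hdij, Finsupp.single_apply, Finsupp.single_apply,
        if_neg (ji_ne_ij hij), if_pos rfl]
      ring
    have hltij : O.lt (FreeMonoid.of i * FreeMonoid.of j)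
        (FreeMonoid.of j * FreeMonoid.of i) := by
      apply (hLM i j hij).2
      · exact Finsupp.mem_support_iff.mpr (by rw [hgij]; simpa using hlam i j hij)
      · exact fun h => ji_ne_ij hij h.symm
    refine ⟨lam j i, Fm j i, hlam i j hij, ?_, hltij, ?_⟩
    · have h0 := hker i j hij
      rw [map_sub, map_sub, map_smul] at h0
      rw [← hιι, ← hιι]
      have h1 := sub_eq_zero.mp h0
      have h2 := sub_eq_iff_eq_add.mp h1
      rw [h2, add_comm]
    · intro V hV
      have hVrange := hFsupp i j hij V hV
      obtain ⟨δ, rfl⟩ := hVrange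
      have hdne : d (ordWord n δ) ≠ 0 := Finsupp.mem_support_iff.mp hV
      have hOlt : O.lt (ordWord n δ) (FreeMonoid.of j * FreeMonoid.of i) := by
        by_cases hVij : ordWord n δ = FreeMonoid.of i * FreeMonoid.of j
        · rw [hVij]; exact hltij
        · apply (hLM i j hij).2
          · apply Finsupp.mem_support_iff.mpr
            rw [hreprg, Finsupp.single_apply, Finsupp.single_apply,
              if_neg, if_neg]
            · simpa using hdne
            · exact fun h => hVij h.symm
            · intro h
              exact not_srt_ji hij (h ▸ srt_ordWord δ)
          · intro h
            exact not_srt_ji hij (h ▸ srt_ordWord δ)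
      refine ⟨hOlt, δ, rfl, ?_⟩
      have : B.repr (π (Fm j i)) δ ≠ 0 := by rw [hreprpi]; exact hdne
      have h4 := hOrd i j hij δ (Finsupp.mem_support_iff.mpr this)
      rw [ab_mul, ab_of, ab_of, add_comm]
      exact h4
  have hKey := key B Ord O π hB rel
  refine ⟨⟨a, B, hBa, Ord, ?_, ?_⟩, rfl⟩
  · intro α β
    have h1 : B α * B β = π (wB K n (ordWord n α * ordWord n β)) := by
      rw [wB_mul, map_mul, hB, hB]
    have h2 := hKey (ordWord n α * ordWord n β)
    rw [ab_mul, ab_ordWord, ab_ordWord] at h2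
    rw [h1]
    exact h2.1
  · intro α β δ hδ hne
    have h1 : B α * B β = π (wB K n (ordWord n α * ordWord n β)) := by
      rw [wB_mul, map_mul, hB, hB]
    have h2 := hKey (ordWord n α * ordWord n β)
    rw [ab_mul, ab_ordWord, ab_ordWord] at h2
    rw [h1] at hδ
    exact h2.2 δ hδ hne

end Thm9

namespace Thm9
open Free9

variable {n : ℕ}

/-- The word order induced by a monomial order, with lexicographic tie-break. -/
def owlt (M : MonOrder n) (U V : FreeMonoid (Fin n)) : Prop :=
  M.lt (ab U) (ab V) ∨ (ab U = ab V ∧ wlex U V)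

lemma fiber_finite (m : Fin n → ℕ) : {U : FreeMonoid (Fin n) | ab U = m}.Finite := by
  classical
  apply Set.Finite.subset
    (((FreeMonoid.toList (ordWord n m)).permutations.toFinset.image
      (fun l => FreeMonoid.ofList l)).finite_toSet)
  intro U hU
  simp only [Set.mem_setOf_eq] at hU
  simp only [Finset.coe_image, Set.mem_image, Finset.mem_coe, List.mem_toFinset,
    List.mem_permutations]
  refine ⟨FreeMonoid.toList U, ?_, by simp⟩
  exact ab_perm (by rw [hU, ab_ordWord])

lemma owlt_wf (M : MonOrder n) : WellFounded (owlt M) := by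
  have main : ∀ m : Fin n → ℕ, ∀ U : FreeMonoid (Fin n), ab U = m → Acc (owlt M) U := by
    intro m
    induction m using M.wf.induction with
    | _ m ihm =>
      haveI : IsStrictOrder (FreeMonoid (Fin n)) wlex :=
        { irrefl := wlex_irrefl, trans := fun _ _ _ => wlex_trans }
      have hwfo : WellFounded fun (a b : {U : FreeMonoid (Fin n) | ab U = m}) =>
          wlex a.1 b.1 := (fiber_finite m).wellFoundedOn (r := wlex)
      have inner : ∀ u : {U : FreeMonoid (Fin n) | ab U = m}, Acc (owlt M) u.1 := by
        intro u
        induction u using hwfo.induction with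
        | _ u ihu =>
          constructor
          intro V hV
          rcases hV with h | ⟨hab, hlex⟩
          · exact ihm (ab V) (by rw [← u.2]; exact h) V rfl
          · exact ihu ⟨V, by rw [Set.mem_setOf_eq, hab, u.2]⟩ hlex
      intro U hU
      exact inner ⟨U, hU⟩
  exact ⟨fun U => main (ab U) U rfl⟩

lemma owlt_trans (M : MonOrder n) {U V W : FreeMonoid (Fin n)}
    (h1 : owlt M U V) (h2 : owlt M V W) : owlt M U W := by
  rcases h1 with h1 | ⟨e1, l1⟩ <;> rcases h2 with h2 | ⟨e2, l2⟩
  · exact Or.inl (M.lt_trans h1 h2)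
  · exact Or.inl (e2 ▸ h1)
  · exact Or.inl (e1 ▸ h2)
  · exact Or.inr ⟨e1.trans e2, wlex_trans l1 l2⟩

lemma owlt_total (M : MonOrder n) (U V : FreeMonoid (Fin n)) :
    owlt M U V ∨ U = V ∨ owlt M V U := by
  rcases M.lt_total (ab U) (ab V) with h | h | h
  · exact Or.inl (Or.inl h)
  · rcases wlex_total U V with hl | hl | hl
    · exact Or.inl (Or.inr ⟨h, hl⟩)
    · exact Or.inr (Or.inl hl)
    · exact Or.inr (Or.inr (Or.inr ⟨h.symm, hl⟩))
  · exact Or.inr (Or.inr (Or.inl h))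

lemma owlt_mul (M : MonOrder n) (W Z U V : FreeMonoid (Fin n)) (h : owlt M U V) :
    owlt M (W * U * Z) (W * V * Z) := by
  rcases h with h | ⟨hab, hlex⟩
  · left
    rw [ab_mul, ab_mul, ab_mul, ab_mul]
    exact M.add_both _ _ h
  · right
    constructor
    · rw [ab_mul, ab_mul, ab_mul, ab_mul, hab]
    · exact wlex_mul hlex hab

lemma owlt_subword (M : MonOrder n) (W Z U V : FreeMonoid (Fin n))
    (hV : V = W * U * Z) (hne : U ≠ V) : owlt M U V := by
  by_cases h0 : ab W + ab Z = 0
  · exfalso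
    have hW : ab W = 0 := by
      funext i
      have := congrFun h0 i
      simpa using (Nat.add_eq_zero.mp this).1
    have hZ : ab Z = 0 := by
      funext i
      have := congrFun h0 i
      simpa using (Nat.add_eq_zero.mp this).2
    rw [(ab_eq_zero_iff W).mp hW, (ab_eq_zero_iff Z).mp hZ, one_mul, mul_one] at hV
    exact hne hV.symm
  · left
    have h1 : M.lt 0 (ab W + ab Z) := M.zero_min _ h0
    have h2 := M.add_right (ab U) h1
    rw [zero_add] at h2
    have h3 : ab W + ab Z + ab U = ab V := by
      rw [hV, ab_mul, ab_mul]
      funext i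
      simp only [Pi.add_apply]
      omega
    rwa [h3] at h2

/-- Packaging. -/
def OW (M : MonOrder n) : WordOrder n where
  lt := owlt M
  wf := owlt_wf M
  lt_trans := fun h1 h2 => owlt_trans M h1 h2
  lt_total := owlt_total M
  mul_compat := owlt_mul M
  subword := owlt_subword M

lemma owlt_irrefl (M : MonOrder n) (U : FreeMonoid (Fin n)) : ¬ owlt M U U := by
  rintro (h | ⟨_, h⟩)
  · exact M.irrefl _ h
  · exact wlex_irrefl U h

/-- Among words with the same exponent, the ordered word is `owlt`-smallest. -/
lemma owlt_ordWord_min (M : MonOrder n) {U : FreeMonoid (Fin n)} (hU : U ≠ ordWord n (ab U)) :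
    owlt M (ordWord n (ab U)) U := by
  right
  refine ⟨ab_ordWord (ab U), ?_⟩
  rcases sorted_lex_min (FreeMonoid.toList (ordWord n (ab U))) (FreeMonoid.toList U)
      (srt_ordWord (ab U)) (ab_perm (ab_ordWord (ab U))) with h | h
  · exact absurd (FreeMonoid.toList.injective h).symm hU
  · exact h

end Thm9

namespace Thm9
open Free9
open scoped Classical

variable {K : Type*} [Field K] {A : Type*} [Ring A] [Algebra K A] {n : ℕ}

lemma wordOrder_irrefl (O : WordOrder n) (U : FreeMonoid (Fin n)) : ¬ O.lt U U := by
  intro h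
  exact (O.wf.apply U).rec (fun a _ ih hh => ih a hh hh) h

lemma isLMX_unique (O : WordOrder n) {g : FreeAlgebra K (Fin n)} {U U' : FreeMonoid (Fin n)}
    (h : IsLMX O g U) (h' : IsLMX O g U') : U = U' := by
  by_contra hne
  exact wordOrder_irrefl O U (O.lt_trans (h'.2 U h.1 hne) (h.2 U' h'.1 (Ne.symm hne)))

/-- Evaluation of a combination of basis words indexed by ordered words. -/
lemma sum_single_ordWord_apply (c : (Fin n → ℕ) →₀ K) (W : FreeMonoid (Fin n)) :
    (c.sum fun δ t => Finsupp.single (ordWord n δ) t) W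
      = if W ∈ Set.range (ordWord n) then c (ab W) else 0 := by
  classical
  rw [Finsupp.sum, Finsupp.coe_finset_sum, Finset.sum_apply]
  have hterm : ∀ δ ∈ c.support, (Finsupp.single (ordWord n δ) (c δ)) W
      = if ordWord n δ = W then c δ else 0 := fun δ _ => Finsupp.single_apply
  rw [Finset.sum_congr rfl hterm]
  by_cases hr : W ∈ Set.range (ordWord n)
  · obtain ⟨m, rfl⟩ := hr
    rw [if_pos ⟨m, rfl⟩, ab_ordWord]
    by_cases hm : m ∈ c.support
    · rw [Finset.sum_eq_single_of_mem m hm]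
      · rw [if_pos rfl]
      · intro δ hδ hne
        rw [if_neg]
        intro h
        exact hne (by have := congrArg ab h; rwa [ab_ordWord, ab_ordWord] at this)
    · rw [Finset.sum_eq_zero, (Finsupp.notMem_support_iff.mp hm)]
      intro δ hδ
      rw [if_neg]
      intro h
      have := congrArg ab h; rw [ab_ordWord, ab_ordWord] at this
      exact hm (this ▸ hδ)
  · rw [if_neg hr, Finset.sum_eq_zero]
    intro δ hδ
    rw [if_neg (fun h => hr ⟨δ, h⟩)]

section Forward

variable (S : SolvAlg K A n)

/-- The canonical projection. -/
def piS : FreeAlgebra K (Fin n) →ₐ[K] A := FreeAlgebra.lift K S.gen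

/-- The exponent of `a_i a_j`. -/
def eV (i j : Fin n) : Fin n → ℕ := Pi.single i 1 + Pi.single j 1

/-- The leading coefficient of `a_j a_i`. -/
def lamD : Fin n → Fin n → K := fun j i => S.basis.repr (S.gen j * S.gen i) (eV i j)

/-- The tail of `a_j a_i`. -/
def tailD (j i : Fin n) : (Fin n → ℕ) →₀ K :=
  (S.basis.repr (S.gen j * S.gen i)).erase (eV i j)

/-- The tail, lifted to the free algebra via ordered words. -/
def FmD : Fin n → Fin n → FreeAlgebra K (Fin n) := fun j i =>
  (tailD S j i).sum fun δ t => t • wB K n (ordWord n δ)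

/-- The defining relations. -/
def gD (j i : Fin n) : FreeAlgebra K (Fin n) :=
  FreeAlgebra.ι K j * FreeAlgebra.ι K i
    - lamD S j i • (FreeAlgebra.ι K i * FreeAlgebra.ι K j) - FmD S j i

lemma hB_forward (m : Fin n → ℕ) : piS S (wB K n (ordWord n m)) = S.basis m := by
  rw [piS, lift_wB_ordWord, S.basis_eq]

lemma gen_eq_basis (p : Fin n) : S.gen p = S.basis (Pi.single p 1) := by
  have h1 : FreeMonoid.of p = ordWord n (Pi.single p 1) := by
    have hs : Srt (FreeMonoid.of p) := by
      rw [Srt, FreeMonoid.toList_of]; simp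
    have := srt_eq_ordWord hs
    rwa [ab_of] at this
  have := hB_forward S (Pi.single p 1)
  rw [← h1] at this
  rw [← this, piS, wB_of, FreeAlgebra.lift_ι_apply]

lemma basis_eV {i j : Fin n} (hij : i < j) : S.basis (eV i j) = S.gen i * S.gen j := by
  have := hB_forward S (eV i j)
  rw [show ordWord n (eV i j) = FreeMonoid.of i * FreeMonoid.of j from by
    rw [eV]; exact ordWord_ij hij] at this
  rw [← this, wB_mul, map_mul, wB_of, wB_of, piS, FreeAlgebra.lift_ι_apply,
    FreeAlgebra.lift_ι_apply]

lemma repr_aji (j i : Fin n) : S.basis.repr (S.gen j * S.gen i)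
    = S.basis.repr (S.basis (Pi.single j 1) * S.basis (Pi.single i 1)) := by
  rw [← gen_eq_basis, ← gen_eq_basis]

lemma lamD_ne {i j : Fin n} (hij : i < j) : lamD S j i ≠ 0 := by
  have h := S.s2_lc (Pi.single j 1) (Pi.single i 1)
  rw [lamD, repr_aji]
  have he : Pi.single j 1 + Pi.single i 1 = eV i j := by rw [eV, add_comm]
  rwa [he] at h

lemma tailD_lt {i j : Fin n} (hij : i < j) {δ : Fin n → ℕ} (hδ : δ ∈ (tailD S j i).support) :
    S.ord.lt δ (eV i j) := by
  rw [tailD, Finsupp.support_erase] at hδ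
  have hne : δ ≠ eV i j := Finset.ne_of_mem_erase hδ
  have hmem : δ ∈ (S.basis.repr (S.gen j * S.gen i)).support := Finset.mem_of_mem_erase hδ
  have h := S.s2_lower (Pi.single j 1) (Pi.single i 1) δ
  rw [← repr_aji] at h
  have he : Pi.single j 1 + Pi.single i 1 = eV i j := by rw [eV, add_comm]
  rw [he] at h
  exact h hmem hne

lemma tailD_ne {i j : Fin n} {δ : Fin n → ℕ} (hδ : δ ∈ (tailD S j i).support) : δ ≠ eV i j := by
  rw [tailD, Finsupp.support_erase] at hδ
  exact Finset.ne_of_mem_erase hδ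

lemma FmD_repr (j i : Fin n) (W : FreeMonoid (Fin n)) :
    (wB K n).repr (FmD S j i) W
      = if W ∈ Set.range (ordWord n) then (tailD S j i) (ab W) else 0 := by
  classical
  rw [← sum_single_ordWord_apply]
  rw [FmD, Finsupp.sum, map_sum, Finsupp.sum]
  rw [Finsupp.coe_finset_sum, Finset.sum_apply, Finsupp.coe_finset_sum, Finset.sum_apply]
  refine Finset.sum_congr rfl fun δ hδ => ?_
  rw [map_smul, wB_repr_self, Finsupp.smul_apply, Finsupp.single_apply, Finsupp.single_apply]
  split <;> simp

lemma FmD_supp_range (j i : Fin n) :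
    ∀ W ∈ ((wB K n).repr (FmD S j i)).support, W ∈ Set.range (ordWord n) := by
  intro W hW
  have := Finsupp.mem_support_iff.mp hW
  rw [FmD_repr] at this
  by_contra hr
  rw [if_neg hr] at this
  exact this rfl

lemma pi_FmD (j i : Fin n) :
    piS S (FmD S j i) = (tailD S j i).sum fun δ t => t • S.basis δ := by
  rw [FmD, Finsupp.sum, map_sum, Finsupp.sum]
  refine Finset.sum_congr rfl fun δ hδ => ?_
  rw [map_smul, hB_forward]

lemma repr_pi_FmD (j i : Fin n) :
    S.basis.repr (piS S (FmD S j i)) = tailD S j i := by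
  rw [pi_FmD, map_finsuppSum]
  have : ∀ δ ∈ (tailD S j i).support,
      S.basis.repr ((tailD S j i) δ • S.basis δ) = Finsupp.single δ ((tailD S j i) δ) := by
    intro δ _
    rw [map_smul, S.basis.repr_self, Finsupp.smul_single, smul_eq_mul, mul_one]
  rw [Finsupp.sum, Finset.sum_congr rfl this, ← Finsupp.sum, Finsupp.sum_single]

lemma pi_gD {i j : Fin n} (hij : i < j) : piS S (gD S j i) = 0 := by
  have hsum : S.gen j * S.gen i
      = (S.basis.repr (S.gen j * S.gen i)).sum fun δ t => t • S.basis δ := by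
    conv_lhs => rw [← S.basis.linearCombination_repr (S.gen j * S.gen i)]
    rw [Finsupp.linearCombination_apply]
  have hmem : eV i j ∈ (S.basis.repr (S.gen j * S.gen i)).support :=
    Finsupp.mem_support_iff.mpr (lamD_ne S hij)
  have hsplit : S.gen j * S.gen i
      = lamD S j i • S.basis (eV i j) + (tailD S j i).sum fun δ t => t • S.basis δ := by
    rw [hsum, Finsupp.sum, ← Finset.add_sum_erase _ _ hmem]
    congr 1
    rw [tailD, Finsupp.sum, Finsupp.support_erase]
    refine Finset.sum_congr rfl fun δ hδ => ?_
    rw [Finsupp.erase_ne (Finset.ne_of_mem_erase hδ)]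
  rw [gD, map_sub, map_sub, map_smul]
  simp only [piS, map_mul, FreeAlgebra.lift_ι_apply]
  have hFm := pi_FmD S j i
  rw [piS] at hFm
  rw [hFm, hsplit, basis_eV S hij]
  abel

lemma gD_repr (j i : Fin n) (V : FreeMonoid (Fin n)) :
    (wB K n).repr (gD S j i) V
      = (Finsupp.single (FreeMonoid.of j * FreeMonoid.of i) (1:K)) V
        - lamD S j i * (Finsupp.single (FreeMonoid.of i * FreeMonoid.of j) (1:K)) V
        - (wB K n).repr (FmD S j i) V := by
  have hιι : ∀ (p q : Fin n), FreeAlgebra.ι K p * FreeAlgebra.ι K q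
      = wB K n (FreeMonoid.of p * FreeMonoid.of q) := by
    intro p q; rw [wB_mul, wB_of, wB_of]
  rw [gD, map_sub, map_sub, map_smul, hιι, hιι, wB_repr_self, wB_repr_self]
  simp only [Finsupp.sub_apply, Finsupp.smul_apply, smul_eq_mul]

lemma gD_repr_ji {i j : Fin n} (hij : i < j) :
    (wB K n).repr (gD S j i) (FreeMonoid.of j * FreeMonoid.of i) = 1 := by
  rw [gD_repr, FmD_repr, if_neg, Finsupp.single_apply, Finsupp.single_apply,
    if_pos rfl, if_neg (fun h => ji_ne_ij hij h.symm)]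
  · ring
  · intro hr
    exact not_srt_ji hij ((ordWord_mem_range_iff _).mp hr)

lemma gD_repr_ij {i j : Fin n} (hij : i < j) :
    (wB K n).repr (gD S j i) (FreeMonoid.of i * FreeMonoid.of j) = - lamD S j i := by
  rw [gD_repr, FmD_repr, Finsupp.single_apply, Finsupp.single_apply,
    if_neg (ji_ne_ij hij), if_pos rfl]
  rw [if_pos ((ordWord_mem_range_iff _).mpr (srt_of_ij hij)), ab_ij]
  have : (tailD S j i) (eV i j) = 0 := by
    rw [tailD, Finsupp.erase_same]
  rw [eV] at this
  rw [this]
  ring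

lemma gD_ne_zero {i j : Fin n} (hij : i < j) : gD S j i ≠ 0 := by
  intro h
  have := gD_repr_ji S hij
  rw [h, map_zero] at this
  simpa using this

lemma ab_ji {i j : Fin n} : ab (FreeMonoid.of j * FreeMonoid.of i)
    = Pi.single i 1 + Pi.single j 1 := by
  rw [ab_mul, ab_of, ab_of, add_comm]

lemma gD_supp {i j : Fin n} (hij : i < j) {V : FreeMonoid (Fin n)}
    (hV : V ∈ ((wB K n).repr (gD S j i)).support) :
    V = FreeMonoid.of j * FreeMonoid.of i ∨ V = FreeMonoid.of i * FreeMonoid.of j ∨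
      (V ∈ Set.range (ordWord n) ∧ (tailD S j i) (ab V) ≠ 0) := by
  classical
  by_contra hcon
  push_neg at hcon
  obtain ⟨h1, h2, h3⟩ := hcon
  have := Finsupp.mem_support_iff.mp hV
  rw [gD_repr, Finsupp.single_apply, Finsupp.single_apply, if_neg (fun h => h1 h.symm),
    if_neg (fun h => h2 h.symm), FmD_repr] at this
  apply this
  by_cases hr : V ∈ Set.range (ordWord n)
  · rw [if_pos hr, h3 hr]; ring
  · rw [if_neg hr]; ring

lemma isLMX_gD {i j : Fin n} (hij : i < j) :
    IsLMX (OW S.ord) (gD S j i) (FreeMonoid.of j * FreeMonoid.of i) := by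
  constructor
  · exact Finsupp.mem_support_iff.mpr (by rw [gD_repr_ji S hij]; exact one_ne_zero)
  · intro V hV hne
    rcases gD_supp S hij hV with h | h | ⟨hr, ht⟩
    · exact absurd h hne
    · subst h
      have h1 : ordWord n (ab (FreeMonoid.of j * FreeMonoid.of i))
          = FreeMonoid.of i * FreeMonoid.of j := by
        rw [ab_ji, ordWord_ij hij]
      have := owlt_ordWord_min S.ord
        (U := FreeMonoid.of j * FreeMonoid.of i) (by rw [h1]; exact ji_ne_ij hij)
      rwa [h1] at this
    · left
      obtain ⟨δ, rfl⟩ := hr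
      rw [ab_ordWord] at ht
      rw [ab_ordWord, ab_ji]
      have := tailD_lt S hij (Finsupp.mem_support_iff.mpr ht)
      rwa [eV] at this

end Forward
end Thm9

namespace Thm9
open Free9
open scoped Classical

variable {K : Type*} [Field K] {A : Type*} [Ring A] [Algebra K A] {n : ℕ}
variable (S : SolvAlg K A n)

lemma ιι_eq_wB (p q : Fin n) : FreeAlgebra.ι K p * FreeAlgebra.ι K q
    = wB K n (FreeMonoid.of p * FreeMonoid.of q) := by
  rw [wB_mul, wB_of, wB_of]

lemma rel_forward : ∀ i j : Fin n, i < j → ∃ (lm : K) (F : FreeAlgebra K (Fin n)),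
    lm ≠ 0 ∧
    piS S (wB K n (FreeMonoid.of j * FreeMonoid.of i))
      = lm • piS S (wB K n (FreeMonoid.of i * FreeMonoid.of j)) + piS S F ∧
    (OW S.ord).lt (FreeMonoid.of i * FreeMonoid.of j) (FreeMonoid.of j * FreeMonoid.of i) ∧
    (∀ V ∈ ((wB K n).repr F).support,
      (OW S.ord).lt V (FreeMonoid.of j * FreeMonoid.of i) ∧
      ∃ δ, V = ordWord n δ ∧ S.ord.lt δ (ab (FreeMonoid.of j * FreeMonoid.of i))) := by
  intro i j hij
  refine ⟨lamD S j i, FmD S j i, lamD_ne S hij, ?_, ?_, ?_⟩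
  · have h0 := pi_gD S hij
    rw [gD, map_sub, map_sub, map_smul, ιι_eq_wB, ιι_eq_wB] at h0
    have h1 := sub_eq_zero.mp h0
    have h2 := sub_eq_iff_eq_add.mp h1
    rw [h2, add_comm]
  · have h1 : ordWord n (ab (FreeMonoid.of j * FreeMonoid.of i))
        = FreeMonoid.of i * FreeMonoid.of j := by rw [ab_ji, ordWord_ij hij]
    have := owlt_ordWord_min S.ord
      (U := FreeMonoid.of j * FreeMonoid.of i) (by rw [h1]; exact ji_ne_ij hij)
    rw [h1] at this
    exact this
  · intro V hV
    have h := Finsupp.mem_support_iff.mp hV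
    rw [FmD_repr] at h
    by_cases hr : V ∈ Set.range (ordWord n)
    · rw [if_pos hr] at h
      obtain ⟨δ, rfl⟩ := hr
      rw [ab_ordWord] at h
      have hlt := tailD_lt S hij (Finsupp.mem_support_iff.mpr h)
      rw [eV] at hlt
      refine ⟨Or.inl ?_, δ, rfl, ?_⟩
      · rw [ab_ordWord, ab_ji]; exact hlt
      · rw [ab_ji]; exact hlt
    · rw [if_neg hr] at h; exact absurd rfl h

lemma hKey_forward : ∀ U : FreeMonoid (Fin n),
    Lead S.basis S.ord (piS S (wB K n U)) (ab U) :=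
  key S.basis S.ord (OW S.ord) (piS S) (hB_forward S) (rel_forward S)

lemma isGBX_forward : IsGBX (OW S.ord) {x | FreeAlgebra.lift K S.gen x = 0}
    {g | ∃ i j : Fin n, i < j ∧ g = gD S j i} := by
  have hKey := hKey_forward S
  refine ⟨?_, ?_, ?_⟩
  · rintro g ⟨i, j, hij, rfl⟩
    show FreeAlgebra.lift K S.gen (gD S j i) = 0
    have := pi_gD S hij; rwa [piS] at this
  · rintro ⟨i, j, hij, h0⟩
    exact gD_ne_zero S hij h0.symm
  · intro F hF hFne
    have hF' : FreeAlgebra.lift K S.gen F = 0 := hF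
    have hsupp : ((wB K n).repr F).support.Nonempty := by
      rw [Finsupp.support_nonempty_iff]
      intro h
      exact hFne ((wB K n).repr.map_eq_zero_iff.mp h)
    obtain ⟨V, hVmem, hVmax⟩ := exists_rmax (owlt S.ord)
      (fun h1 h2 => owlt_trans S.ord h1 h2) (owlt_total S.ord) _ hsupp
    have hLMF : IsLMX (OW S.ord) F V := ⟨hVmem, hVmax⟩
    have hVns : ¬ Srt V := by
      intro hsrt
      have hVeq : V = ordWord n (ab V) := srt_eq_ordWord hsrt
      have hphi : (FreeAlgebra.lift K S.gen) F
          = ∑ U ∈ ((wB K n).repr F).support,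
              ((wB K n).repr F) U • piS S (wB K n U) := by
        conv_lhs => rw [← (wB K n).linearCombination_repr F, Finsupp.linearCombination_apply]
        rw [Finsupp.sum, map_sum]
        exact Finset.sum_congr rfl fun U _ => map_smul _ _ _
      have hcoeff : S.basis.repr ((FreeAlgebra.lift K S.gen) F) (ab V)
          = ((wB K n).repr F) V * S.basis.repr (piS S (wB K n V)) (ab V) := by
        rw [hphi, map_sum, Finsupp.coe_finset_sum, Finset.sum_apply]
        rw [Finset.sum_eq_single_of_mem V hVmem]
        · rw [map_smul, Finsupp.smul_apply, smul_eq_mul]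
        · intro U hU hne
          rw [map_smul, Finsupp.smul_apply, smul_eq_mul]
          have hUV := hVmax U hU hne
          have hz : S.basis.repr (piS S (wB K n U)) (ab V) = 0 := by
            by_contra hnz
            have hmem2 : ab V ∈ (S.basis.repr (piS S (wB K n U))).support :=
              Finsupp.mem_support_iff.mpr hnz
            have hlead := hKey U
            rcases hUV with hlt | ⟨hab, hlex⟩
            · by_cases habv : ab V = ab U
              · rw [habv] at hlt; exact absurd hlt (S.ord.irrefl _)
              · have h2 := hlead.2 (ab V) hmem2 habv
                exact absurd (S.ord.lt_trans h2 hlt) (S.ord.irrefl _)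
            · have hUne : U ≠ ordWord n (ab U) := by
                rw [hab, ← hVeq]; exact hne
              have hmin := owlt_ordWord_min S.ord hUne
              rw [hab, ← hVeq] at hmin
              rcases hmin with h | ⟨_, h⟩
              · rw [hab] at h; exact absurd h (S.ord.irrefl _)
              · exact wlex_asymm hlex h
          rw [hz, mul_zero]
      have hne2 : S.basis.repr ((FreeAlgebra.lift K S.gen) F) (ab V) ≠ 0 := by
        rw [hcoeff]
        exact mul_ne_zero (Finsupp.mem_support_iff.mp hVmem) (hKey V).1
      apply hne2
      rw [hF', map_zero]
      rfl
    rcases sorted_or_descent (FreeMonoid.toList V) with hs | ⟨W, Z, i, j, hij, hdec⟩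
    · exact absurd hs hVns
    refine ⟨gD S j i, ⟨i, j, hij, rfl⟩, FreeMonoid.of j * FreeMonoid.of i, V,
      isLMX_gD S hij, hLMF, ?_⟩
    refine ⟨FreeMonoid.ofList W, FreeMonoid.ofList Z, ?_⟩
    apply FreeMonoid.toList.injective
    simp only [FreeMonoid.toList_mul, FreeMonoid.toList_ofList, FreeMonoid.toList_of, hdec]
    simp

end Thm9

namespace Thm9
open Free9
open scoped Classical

variable {K : Type*} [Field K] {A : Type*} [Ring A] [Algebra K A] {n : ℕ}
variable (S : SolvAlg K A n)

lemma pair_word_inj {p q p' q' : Fin n}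
    (h : FreeMonoid.of p * FreeMonoid.of q = FreeMonoid.of p' * FreeMonoid.of q') :
    p = p' ∧ q = q' := by
  have := congrArg FreeMonoid.toList h
  simp only [FreeMonoid.toList_mul, FreeMonoid.toList_of] at this
  exact ⟨List.head_eq_of_cons_eq this, by
    have := List.tail_eq_of_cons_eq this
    exact List.head_eq_of_cons_eq this⟩

lemma srt_normal {W : FreeMonoid (Fin n)} (hW : Srt W) :
    W ∈ NormalWords (OW S.ord) {g | ∃ i j : Fin n, i < j ∧ g = gD S j i} := by
  rintro g ⟨i, j, hij, rfl⟩ U hU hdvd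
  have hUji : U = FreeMonoid.of j * FreeMonoid.of i := isLMX_unique _ hU (isLMX_gD S hij)
  subst hUji
  obtain ⟨P, Q, hPQ⟩ := hdvd
  have hsub : List.Sublist [j, i] (FreeMonoid.toList W) := by
    have : FreeMonoid.toList W = FreeMonoid.toList P ++ [j, i] ++ FreeMonoid.toList Q := by
      rw [hPQ]
      simp [FreeMonoid.toList_mul, FreeMonoid.toList_of]
    rw [this]
    exact (List.infix_append (FreeMonoid.toList P) [j, i] (FreeMonoid.toList Q)).sublist
  have hsorted : List.Pairwise (· ≤ ·) [j, i] := hW.sublist hsub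
  have : j ≤ i := List.rel_of_pairwise_cons hsorted (a' := i) (by simp)
  exact absurd hij (not_lt_of_ge this)

lemma isMinGBX_forward : IsMinGBX (OW S.ord) {x | FreeAlgebra.lift K S.gen x = 0}
    {g | ∃ i j : Fin n, i < j ∧ g = gD S j i} := by
  refine ⟨isGBX_forward S, ?_⟩
  intro G' hG' hGB'
  obtain ⟨g₀, hg₀G, hg₀G'⟩ := Set.exists_of_ssubset hG'
  obtain ⟨i, j, hij, rfl⟩ := hg₀G
  have hmem : gD S j i ∈ {x | FreeAlgebra.lift K S.gen x = 0} := by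
    show FreeAlgebra.lift K S.gen (gD S j i) = 0
    have := pi_gD S hij; rwa [piS] at this
  obtain ⟨g', hg'G', U, V, hLMg', hLMg0, hdvd⟩ := hGB'.2.2 (gD S j i) hmem (gD_ne_zero S hij)
  obtain ⟨i', j', hij', rfl⟩ := hG'.subset hg'G'
  have hU : U = FreeMonoid.of j' * FreeMonoid.of i' := isLMX_unique _ hLMg' (isLMX_gD S hij')
  have hV : V = FreeMonoid.of j * FreeMonoid.of i := isLMX_unique _ hLMg0 (isLMX_gD S hij)
  subst hU hV
  obtain ⟨P, Q, hPQ⟩ := hdvd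
  have hlen := congrArg (fun x => (FreeMonoid.toList x).length) hPQ
  simp only [FreeMonoid.toList_mul, FreeMonoid.toList_of, List.length_append,
    List.length_cons, List.length_nil] at hlen
  have hP : FreeMonoid.toList P = [] := List.length_eq_zero_iff.mp (by omega)
  have hQ : FreeMonoid.toList Q = [] := List.length_eq_zero_iff.mp (by omega)
  have hP1 : P = 1 := FreeMonoid.toList.injective (by rw [hP, FreeMonoid.toList_one])
  have hQ1 : Q = 1 := FreeMonoid.toList.injective (by rw [hQ, FreeMonoid.toList_one])
  rw [hP1, hQ1, one_mul, mul_one] at hPQ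
  obtain ⟨hj, hi⟩ := pair_word_inj hPQ
  rw [← hj, ← hi] at hg'G'
  exact hg₀G' hg'G'

lemma isRedGBX_forward : IsRedGBX (OW S.ord) {x | FreeAlgebra.lift K S.gen x = 0}
    {g | ∃ i j : Fin n, i < j ∧ g = gD S j i} := by
  refine ⟨isMinGBX_forward S, ?_, ?_⟩
  · rintro g ⟨i, j, hij, rfl⟩ U hU
    have hUji : U = FreeMonoid.of j * FreeMonoid.of i := isLMX_unique _ hU (isLMX_gD S hij)
    rw [hUji]
    exact gD_repr_ji S hij
  · rintro g ⟨i, j, hij, rfl⟩ U hU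
    have hUji : U = FreeMonoid.of j * FreeMonoid.of i := isLMX_unique _ hU (isLMX_gD S hij)
    subst hUji
    have heq : gD S j i - wB K n (FreeMonoid.of j * FreeMonoid.of i)
        = -(lamD S j i • wB K n (FreeMonoid.of i * FreeMonoid.of j)) - FmD S j i := by
      rw [gD, ιι_eq_wB, ιι_eq_wB]
      abel
    rw [heq]
    apply Submodule.sub_mem
    · apply Submodule.neg_mem
      apply Submodule.smul_mem
      apply Submodule.subset_span
      exact ⟨FreeMonoid.of i * FreeMonoid.of j, srt_normal S (srt_of_ij hij), rfl⟩
    · rw [FmD, Finsupp.sum]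
      apply Submodule.sum_mem
      intro δ hδ
      apply Submodule.smul_mem
      apply Submodule.subset_span
      exact ⟨ordWord n δ, srt_normal S (srt_ordWord δ), rfl⟩

lemma gset_finite : Set.Finite {g | ∃ i j : Fin n, i < j ∧ g = gD S j i} := by
  apply Set.Finite.subset (Set.finite_range (fun p : Fin n × Fin n => gD S p.1 p.2))
  rintro g ⟨i, j, _, rfl⟩
  exact ⟨(j, i), rfl⟩

end Thm9


/-- Theorem 1.4.16: a finitely generated `K`-algebra `A = K[a_1,…,a_n]` (with `{a_i}` a
minimal generating set, `π : K⟨X⟩ → A` the canonical epimorphism and `I = Ker π`) is a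
solvable polynomial algebra iff (a) for some monomial ordering on words, `I` has a finite
Gröbner basis whose reduced Gröbner basis consists of elements
`g_{ji} = X_jX_i − λ_{ji}X_iX_j − F_{ji}` (`i < j`) with `LM(g_{ji}) = X_jX_i`, `λ_{ji} ≠ 0`
and `F_{ji}` a combination of ordered words — so that the ordered monomials in the `a_i`
form a PBW `K`-basis of `A` — and (b) there is a monomial ordering `≺` on this PBW basis
such that `LM(F̄_{ji}) ≺ a_i a_j` whenever `F̄_{ji} ≠ 0`. -/
theorem solvAlg_characterization {K : Type*} [Field K] {A : Type*} [Ring A] [Algebra K A]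
    {n : ℕ} (a : Fin n → A)
    (hgen : Algebra.adjoin K (Set.range a) = ⊤)
    (hmin : ∀ i : Fin n, Algebra.adjoin K (a '' {j | j ≠ i}) ≠ ⊤) :
    (∃ S : SolvAlg K A n, S.gen = a) ↔
    ∃ (O : WordOrder n) (lam : Fin n → Fin n → K)
      (Fm : Fin n → Fin n → FreeAlgebra K (Fin n)),
      (∃ G₀ : Set (FreeAlgebra K (Fin n)), G₀.Finite ∧
        Free9.IsGBX O {x | FreeAlgebra.lift K a x = 0} G₀) ∧
      (∀ i j : Fin n, i < j → lam j i ≠ 0) ∧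
      Free9.IsRedGBX O {x | FreeAlgebra.lift K a x = 0}
        {g | ∃ i j : Fin n, i < j ∧
          g = FreeAlgebra.ι K j * FreeAlgebra.ι K i
              - lam j i • (FreeAlgebra.ι K i * FreeAlgebra.ι K j) - Fm j i} ∧
      (∀ i j : Fin n, i < j →
        Free9.IsLMX O (FreeAlgebra.ι K j * FreeAlgebra.ι K i
            - lam j i • (FreeAlgebra.ι K i * FreeAlgebra.ι K j) - Fm j i)
          (FreeMonoid.of j * FreeMonoid.of i)) ∧
      (∀ i j : Fin n, i < j → ∀ W ∈ ((Free9.wB K n).repr (Fm j i)).support,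
        W ∈ Set.range (Free9.ordWord n)) ∧
      ∃ B : Module.Basis (Fin n → ℕ) K A, (∀ α, B α = SolvMono a α) ∧
        ∃ Ord : MonOrder n, ∀ i j : Fin n, i < j →
          ∀ δ ∈ (B.repr (FreeAlgebra.lift K a (Fm j i))).support,
            Ord.lt δ (Pi.single i 1 + Pi.single j 1) := by
  constructor
  · rintro ⟨S, rfl⟩
    refine ⟨Thm9.OW S.ord, Thm9.lamD S, Thm9.FmD S,
      ⟨{g | ∃ i j : Fin n, i < j ∧ g = Thm9.gD S j i}, Thm9.gset_finite S,
        Thm9.isGBX_forward S⟩,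
      fun i j hij => Thm9.lamD_ne S hij,
      Thm9.isRedGBX_forward S,
      fun i j hij => Thm9.isLMX_gD S hij,
      fun i j _ => Thm9.FmD_supp_range S j i,
      S.basis, S.basis_eq, S.ord, ?_⟩
    intro i j hij δ hδ
    have h1 : FreeAlgebra.lift K S.gen (Thm9.FmD S j i) = Thm9.piS S (Thm9.FmD S j i) := rfl
    rw [h1, Thm9.repr_pi_FmD] at hδ
    have := Thm9.tailD_lt S hij hδ
    rwa [Thm9.eV] at this
  · rintro ⟨O, lam, Fm, ⟨G₀, hG₀fin, hG₀⟩, hlam, hred, hLMX, hFsupp, B, hBa, Ord, hOrd⟩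
    apply Thm9.backward a O lam Fm hlam ?_ hLMX hFsupp B hBa Ord hOrd
    intro i j hij
    exact hred.1.1.1 ⟨i, j, hij, rfl⟩
end
end

section
/- Let A be a solvable polynomial algebra with admissible system (𝔅, ≺), L a free left A-module with left monomial ordering ≺_e, and N = Σ_{i=1}^m A ξ_i the submodule generated by nonzero elements U = {ξ_1,…,ξ_m}. Let 𝒢 = {g_1,…,g_t} be a left Gröbner basis of N, and let U_{m×t} and V_{t×m} be matrices over A with (ξ_1,…,ξ_m)^T = U_{m×t}(g_1,…,g_t)^T and (g_1,…,g_t)^T = V_{t×m}(ξ_1,…,ξ_m)^T. Let 𝒮_1,…,𝒮_r ∈ A^{1×t} be a generating set of the syzygy module Syz(𝒢) = {(h_1,…,h_t) | Σ_k h_k g_k = 0}, and let D_{(1)},…,D_{(m)} be the rows of D_{m×m} = U_{m×t}V_{t×m} − E_{m×m} (E the identity matrix). Then the syzygy module Syz(U) = {(h_1,…,h_m) ∈ A^{1×m} | Σ_{i=1}^m h_i ξ_i = 0} is generated (as a left A-module) by {𝒮_1 V_{t×m}, …, 𝒮_r V_{t×m}, D_{(1)}, …, D_{(m)}}. -/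
noncomputable section

open scoped BigOperators

/-- Theorem 3.1.2: with `Ξ = {ξ_1,…,ξ_m}` generating `N`, a left Gröbner basis
`𝒢 = {g_1,…,g_t}` of `N`, transition matrices `U`, `V` with `ξ = U g` and `g = V ξ`,
a generating set `𝒮_1,…,𝒮_r` of `Syz(𝒢)`, and `D = UV − E`, the syzygy module `Syz(Ξ)`
is generated by `{𝒮_1 V, …, 𝒮_r V, D_{(1)}, …, D_{(m)}}`. -/
theorem solvAlg_syzygy_generators {K : Type*} [Field K] {A : Type*} [Ring A] [Algebra K A]
    {n : ℕ} (S : SolvAlg K A n) {s : ℕ} (O : ModOrder S s)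
    {m t r : ℕ} (ξ : Fin m → (Fin s → A)) (hξ : ∀ i, ξ i ≠ 0)
    (g : Fin t → (Fin s → A)) (hg : ∀ k, g k ≠ 0)
    (hGB : SolvAlg.IsGBrel S O.lt
      ((Submodule.span A (Set.range ξ) : Submodule A (Fin s → A)) : Set (Fin s → A))
      (Set.range g))
    (U : Fin m → Fin t → A) (V : Fin t → Fin m → A)
    (hU : ∀ i, ξ i = ∑ k, U i k • g k) (hV : ∀ k, g k = ∑ i, V k i • ξ i)
    (𝒮 : Fin r → (Fin t → A))
    (h𝒮 : ∀ h : Fin t → A, (∑ k, h k • g k = 0) ↔ h ∈ Submodule.span A (Set.range 𝒮)) :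
    ∀ h : Fin m → A, (∑ i, h i • ξ i = 0) ↔
      h ∈ Submodule.span A
        ({x : Fin m → A | ∃ l : Fin r, x = fun j => ∑ k, 𝒮 l k * V k j} ∪
         {x : Fin m → A | ∃ i : Fin m,
            x = fun j => (∑ k, U i k * V k j) - (if i = j then 1 else 0)}) := by
  classical
  -- the right-multiplication-by-V map, as a left A-linear map
  set ψ : (Fin t → A) →ₗ[A] (Fin m → A) :=
    { toFun := fun f j => ∑ k, f k * V k j
      map_add' := fun x y => by
        funext j
        simp [add_mul, Finset.sum_add_distrib]
      map_smul' := fun a x => by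
        funext j
        simp [Finset.mul_sum, mul_assoc] } with hψ
  set Gen : Set (Fin m → A) :=
    ({x : Fin m → A | ∃ l : Fin r, x = fun j => ∑ k, 𝒮 l k * V k j} ∪
     {x : Fin m → A | ∃ i : Fin m,
        x = fun j => (∑ k, U i k * V k j) - (if i = j then 1 else 0)}) with hGen
  intro h
  constructor
  · intro h0
    have hsyz : (fun k => ∑ i, h i * U i k) ∈ Submodule.span A (Set.range 𝒮) := by
      rw [← h𝒮]
      calc ∑ k, (∑ i, h i * U i k) • g k
          = ∑ k, ∑ i, h i • (U i k • g k) := by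
            refine Finset.sum_congr rfl fun k _ => ?_
            rw [Finset.sum_smul]
            exact Finset.sum_congr rfl fun i _ => mul_smul _ _ _
        _ = ∑ i, ∑ k, h i • (U i k • g k) := Finset.sum_comm
        _ = ∑ i, h i • ξ i := by
            refine Finset.sum_congr rfl fun i _ => ?_
            rw [← Finset.smul_sum, ← hU]
        _ = 0 := h0
    have hp1 : ψ (fun k => ∑ i, h i * U i k) ∈ Submodule.span A Gen := by
      have hmap : ψ (fun k => ∑ i, h i * U i k) ∈
          (Submodule.span A (Set.range 𝒮)).map ψ :=
        Submodule.mem_map_of_mem hsyz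
      rw [Submodule.map_span] at hmap
      refine Submodule.span_mono ?_ hmap
      rintro x ⟨f, ⟨l, rfl⟩, rfl⟩
      exact Or.inl ⟨l, rfl⟩
    have hp2 : (∑ i, (-(h i)) •
        (fun j => (∑ k, U i k * V k j) - (if i = j then 1 else 0))) ∈
        Submodule.span A Gen := by
      refine Submodule.sum_mem _ fun i _ => Submodule.smul_mem _ _ ?_
      exact Submodule.subset_span (Or.inr ⟨i, rfl⟩)
    have hdecomp : h = ψ (fun k => ∑ i, h i * U i k) +
        ∑ i, (-(h i)) • (fun j => (∑ k, U i k * V k j) - (if i = j then 1 else 0)) := by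
      funext j
      have hψapp : ψ (fun k => ∑ i, h i * U i k) j = ∑ k, (∑ i, h i * U i k) * V k j := rfl
      simp only [Pi.add_apply, Finset.sum_apply, Pi.smul_apply, smul_eq_mul, hψapp]
      have e1 : ∑ k, (∑ i, h i * U i k) * V k j
          = ∑ i, h i * (∑ k, U i k * V k j) := by
        simp only [Finset.sum_mul]
        rw [Finset.sum_comm]
        refine Finset.sum_congr rfl fun i _ => ?_
        rw [Finset.mul_sum]
        exact Finset.sum_congr rfl fun k _ => mul_assoc _ _ _
      rw [e1, ← Finset.sum_add_distrib]
      have e2 : ∀ i, h i * (∑ k, U i k * V k j) +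
          (-(h i)) * ((∑ k, U i k * V k j) - (if i = j then 1 else 0))
          = if i = j then h i else 0 := by
        intro i
        rw [neg_mul, mul_sub]
        have : h i * (∑ k, U i k * V k j)
            + -(h i * (∑ k, U i k * V k j) - h i * (if i = j then 1 else 0))
            = h i * (if i = j then 1 else 0) := by abel
        rw [this]
        split_ifs <;> simp
      rw [Finset.sum_congr rfl fun i _ => e2 i]
      simp
    rw [hdecomp]
    exact Submodule.add_mem _ hp1 hp2
  · intro hmem
    have hgen : ∀ x ∈ Gen, ∑ i, x i • ξ i = 0 := by
      rintro x (⟨l, rfl⟩ | ⟨i0, rfl⟩)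
      · have hl : (∑ k, 𝒮 l k • g k) = 0 :=
          (h𝒮 (𝒮 l)).mpr (Submodule.subset_span ⟨l, rfl⟩)
        calc ∑ j, (∑ k, 𝒮 l k * V k j) • ξ j
            = ∑ j, ∑ k, 𝒮 l k • (V k j • ξ j) := by
              refine Finset.sum_congr rfl fun j _ => ?_
              rw [Finset.sum_smul]
              exact Finset.sum_congr rfl fun k _ => mul_smul _ _ _
          _ = ∑ k, ∑ j, 𝒮 l k • (V k j • ξ j) := Finset.sum_comm
          _ = ∑ k, 𝒮 l k • g k := by
              refine Finset.sum_congr rfl fun k _ => ?_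
              rw [← Finset.smul_sum, ← hV]
          _ = 0 := hl
      · have e1 : ∑ j, (∑ k, U i0 k * V k j) • ξ j = ξ i0 := by
          calc ∑ j, (∑ k, U i0 k * V k j) • ξ j
              = ∑ j, ∑ k, U i0 k • (V k j • ξ j) := by
                refine Finset.sum_congr rfl fun j _ => ?_
                rw [Finset.sum_smul]
                exact Finset.sum_congr rfl fun k _ => mul_smul _ _ _
            _ = ∑ k, ∑ j, U i0 k • (V k j • ξ j) := Finset.sum_comm
            _ = ∑ k, U i0 k • g k := by
                refine Finset.sum_congr rfl fun k _ => ?_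
                rw [← Finset.smul_sum, ← hV]
            _ = ξ i0 := (hU i0).symm
        have e2 : ∑ j, ((if i0 = j then (1:A) else 0)) • ξ j = ξ i0 := by
          simp [ite_smul]
        calc ∑ j, ((∑ k, U i0 k * V k j) - (if i0 = j then 1 else 0)) • ξ j
            = ∑ j, ((∑ k, U i0 k * V k j) • ξ j
                - ((if i0 = j then (1:A) else 0)) • ξ j) := by
              refine Finset.sum_congr rfl fun j _ => ?_
              rw [sub_smul]
          _ = (∑ j, (∑ k, U i0 k * V k j) • ξ j)
                - ∑ j, ((if i0 = j then (1:A) else 0)) • ξ j := by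
              rw [Finset.sum_sub_distrib]
          _ = 0 := by rw [e1, e2, sub_self]
    refine Submodule.span_induction (hx := hmem) hgen ?_ ?_ ?_
    · simp
    · intro x y _ _ hx hy
      have : ∑ i, (x + y) i • ξ i = (∑ i, x i • ξ i) + ∑ i, y i • ξ i := by
        rw [← Finset.sum_add_distrib]
        exact Finset.sum_congr rfl fun i _ => by rw [Pi.add_apply, add_smul]
      rw [this, hx, hy, add_zero]
    · intro a x _ hx
      calc ∑ i, (a • x) i • ξ i = a • ∑ i, x i • ξ i := by
            rw [Finset.smul_sum]
            exact Finset.sum_congr rfl fun i _ => by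
              rw [Pi.smul_apply, smul_eq_mul, mul_smul]
        _ = 0 := by rw [hx, smul_zero]
end
end
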